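/- arXiv:1007.2845 — 10 statements merged into one kernel-verified Lean document; each statement's English description precedes it below -/
import Mathlib

section
/- If G is a group presented by generators X and relators R (with |X| finite), and exactly s of the relators are not p-th powers of elements of the free group F(X), then the dimension of G/(G'G^p) as a vector space over F_p is at least |X| - s. -/
/-- If `G` is presented by generators `X` (finite) and relators `R`, and exactly `s`
of the relators are not `p`-th powers in the free group `F(X)`, then the `p`-rank of `G`
(the dimension of `G/(G'Gᵖ)` over `𝔽_p`, equivalently the largest number of copies of `C_p`
onto which `G` surjects) is at least `|X| - s`. -/
theorem dim_ge_card_sub_s {X : Type} [Fintype X] (p : ℕ) (hp : p.Prime)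
    (R : Set (FreeGroup X)) (S : Set (FreeGroup X)) (hSR : S ⊆ R)
    (hchar : ∀ r ∈ R, r ∈ S ↔ ¬∃ v : FreeGroup X, v ^ p = r)
    (hfin : S.Finite) (s : ℕ) (hcard : hfin.toFinset.card = s) :
    ∃ f : PresentedGroup R →* (Fin (Fintype.card X - s) → Multiplicative (ZMod p)),
      Function.Surjective f := by
  classical
  haveI : Fact p.Prime := ⟨hp⟩
  set k := Fintype.card X - s with hk
  -- the mod-p abelianization of the free group
  let φ : FreeGroup X →* Multiplicative (X → ZMod p) :=
    FreeGroup.lift (fun x => Multiplicative.ofAdd (Pi.single x (1 : ZMod p)))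
  -- φ is surjective
  have hφ : Function.Surjective φ := by
    have htop : (AddSubgroup.toZModSubmodule p (φ.range.toAddSubgroup')) = ⊤ := by
      rw [eq_top_iff, ← (Pi.basisFun (ZMod p) X).span_eq, Submodule.span_le]
      rintro _ ⟨x, rfl⟩
      simp only [Pi.basisFun_apply, SetLike.mem_coe, AddSubgroup.mem_toZModSubmodule]
      exact ⟨FreeGroup.of x, FreeGroup.lift_apply_of⟩
    intro y
    have : Multiplicative.toAdd y ∈
        (AddSubgroup.toZModSubmodule p (φ.range.toAddSubgroup')) := htop ▸ Submodule.mem_top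
    exact this
  -- the span of the images of the relators
  let W : Submodule (ZMod p) (X → ZMod p) :=
    Submodule.span (ZMod p) ((fun r => Multiplicative.toAdd (φ r)) '' S)
  have hRW : ∀ r ∈ R, Multiplicative.toAdd (φ r) ∈ W := by
    intro r hr
    by_cases hrS : r ∈ S
    · exact Submodule.subset_span ⟨r, hrS, rfl⟩
    · obtain ⟨v, hv⟩ := not_not.mp (fun h => hrS ((hchar r hr).mpr h))
      have h1 : Multiplicative.toAdd (φ r) = p • Multiplicative.toAdd (φ v) := by
        rw [← hv, map_pow]; rfl
      rw [h1, ← Nat.cast_smul_eq_nsmul (ZMod p), ZMod.natCast_self, zero_smul]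
      exact W.zero_mem
  -- dimension count
  have hWle : Module.finrank (ZMod p) W ≤ s := by
    have him : ((fun r => Multiplicative.toAdd (φ r)) '' S) =
        ↑(hfin.toFinset.image (fun r => Multiplicative.toAdd (φ r))) := by
      simp [Set.Finite.coe_toFinset]
    calc Module.finrank (ZMod p) W ≤
        (hfin.toFinset.image (fun r => Multiplicative.toAdd (φ r))).card := by
          rw [show W = Submodule.span (ZMod p)
            ↑(hfin.toFinset.image (fun r => Multiplicative.toAdd (φ r))) from by rw [← him]]
          exact finrank_span_finset_le_card _
      _ ≤ hfin.toFinset.card := Finset.card_image_le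
      _ = s := hcard
  have hquot : k ≤ Module.finrank (ZMod p) ((X → ZMod p) ⧸ W) := by
    have h1 := Submodule.finrank_quotient_add_finrank W
    have h2 : Module.finrank (ZMod p) (X → ZMod p) = Fintype.card X := by
      simp [Module.finrank_pi]
    omega
  -- a surjective linear map from the quotient to (Fin k → ZMod p)
  set d := Module.finrank (ZMod p) ((X → ZMod p) ⧸ W) with hd
  let e : ((X → ZMod p) ⧸ W) ≃ₗ[ZMod p] (Fin d → ZMod p) :=
    (Module.finBasis (ZMod p) ((X → ZMod p) ⧸ W)).equivFun
  let ρ : (Fin d → ZMod p) →ₗ[ZMod p] (Fin k → ZMod p) :=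
    LinearMap.funLeft (ZMod p) (ZMod p) (Fin.castLE hquot)
  have hρ : Function.Surjective ρ :=
    LinearMap.funLeft_surjective_of_injective _ _ _ (Fin.castLE_injective _)
  let L : (X → ZMod p) →ₗ[ZMod p] (Fin k → ZMod p) :=
    ρ ∘ₗ (e : ((X → ZMod p) ⧸ W) →ₗ[ZMod p] _) ∘ₗ W.mkQ
  have hL : Function.Surjective L :=
    hρ.comp (e.surjective.comp (Submodule.mkQ_surjective W))
  have hLW : ∀ w ∈ W, L w = 0 := by
    intro w hw
    have : W.mkQ w = 0 := (Submodule.Quotient.mk_eq_zero W).mpr hw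
    simp [L, LinearMap.comp_apply, this]
  -- assemble the monoid hom
  let g : FreeGroup X →* Multiplicative (Fin k → ZMod p) :=
    (AddMonoidHom.toMultiplicative L.toAddMonoidHom).comp φ
  have hlift : FreeGroup.lift (fun x =>
      Multiplicative.ofAdd (L (Pi.single x (1 : ZMod p)))) = g := by
    apply FreeGroup.ext_hom
    intro x
    simp [g, φ, FreeGroup.lift_apply_of]
  have hrel : ∀ r ∈ R, FreeGroup.lift (fun x =>
      Multiplicative.ofAdd (L (Pi.single x (1 : ZMod p)))) r = 1 := by
    intro r hr
    rw [hlift]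
    have : L (Multiplicative.toAdd (φ r)) = 0 := hLW _ (hRW r hr)
    show Multiplicative.ofAdd (L (Multiplicative.toAdd (φ r))) = 1
    rw [this]; rfl
  let F0 : PresentedGroup R →* Multiplicative (Fin k → ZMod p) := PresentedGroup.toGroup hrel
  -- convert Multiplicative (Fin k → ZMod p) to Fin k → Multiplicative (ZMod p)
  let t : Multiplicative (Fin k → ZMod p) →* (Fin k → Multiplicative (ZMod p)) :=
    { toFun := fun x i => Multiplicative.ofAdd (Multiplicative.toAdd x i)
      map_one' := rfl
      map_mul' := fun a b => rfl }
  have ht : Function.Surjective t := by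
    intro y
    exact ⟨Multiplicative.ofAdd (fun i => Multiplicative.toAdd (y i)), rfl⟩
  refine ⟨t.comp F0, ht.comp ?_⟩
  -- F0 is surjective
  intro y
  obtain ⟨v, hv⟩ := hL (Multiplicative.toAdd y)
  obtain ⟨w, hw⟩ := hφ (Multiplicative.ofAdd v)
  refine ⟨QuotientGroup.mk w, ?_⟩
  have h1 : F0 (QuotientGroup.mk w) = FreeGroup.lift (fun x =>
      Multiplicative.ofAdd (L (Pi.single x (1 : ZMod p)))) w := rfl
  have h2 : g w = y := by
    show Multiplicative.ofAdd (L (Multiplicative.toAdd (φ w))) = y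
    rw [hw]
    show Multiplicative.ofAdd (L v) = y
    rw [hv]
    rfl
  exact h1.trans (by rw [hlift]; exact h2)
end

section
/- For a finitely generated group G with presentation ⟨X|R⟩ with |X| finite, the p-rank d_p(G) is at least the p-deficiency def_p(G;X,R). -/
/-- `ν_p(r)`: the largest `k` such that `r = w^(p^k)` for some `w` in the free group. -/
noncomputable def nuP {X : Type*} (p : ℕ) (r : FreeGroup X) : ℕ :=
  sSup {k : ℕ | ∃ w : FreeGroup X, w ^ p ^ k = r}

/-- The `p`-deficiency of the presentation `⟨X | R⟩`:
`def_p = |X| - Σ_{r ∈ R} p^{-ν_p(r)}`. -/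
noncomputable def pDef {X : Type*} [Fintype X] (p : ℕ) (R : Set (FreeGroup X)) : ℝ :=
  (Fintype.card X : ℝ) - ∑' r : R, ((p : ℝ) ^ (nuP p (r : FreeGroup X)))⁻¹

section Aux

variable {X : Type} [Fintype X] {p : ℕ}

/-- Every element of `Multiplicative (X → ZMod p)` has order dividing `p`. -/
lemma aux_pow_p (g : Multiplicative (X → ZMod p)) : g ^ p = 1 := by
  rw [← ofAdd_toAdd g, ← ofAdd_nsmul]
  have : p • g.toAdd = 0 := by
    funext x
    simp [nsmul_eq_mul, ZMod.natCast_self]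
  rw [this]; rfl

/-- If the image of `r` in the mod-`p` abelianization is nontrivial, then `ν_p(r) = 0`. -/
lemma aux_nuP_eq_zero (hp : p.Prime)
    (θ : FreeGroup X →* Multiplicative (X → ZMod p)) (r : FreeGroup X)
    (hr : θ r ≠ 1) : nuP p r = 0 := by
  have hsub : {k : ℕ | ∃ w : FreeGroup X, w ^ p ^ k = r} ⊆ {0} := by
    rintro k ⟨w, hw⟩
    by_contra hk
    have hk1 : 1 ≤ k := Nat.one_le_iff_ne_zero.2 hk
    have : r = (w ^ p ^ (k - 1)) ^ p := by
      rw [← pow_mul, ← pow_succ, Nat.sub_add_cancel hk1, hw]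
    apply hr
    rw [this, map_pow, aux_pow_p]
  have h0 : (0 : ℕ) ∈ {k : ℕ | ∃ w : FreeGroup X, w ^ p ^ k = r} := ⟨r, by simp⟩
  have : {k : ℕ | ∃ w : FreeGroup X, w ^ p ^ k = r} = {0} :=
    Set.Subset.antisymm hsub (Set.singleton_subset_iff.2 h0)
  rw [nuP, this, csSup_singleton]

end Aux

/-- The `p`-rank `d_p(G)` is at least the `p`-deficiency `def_p(G; X, R)`: for every
natural number `n ≤ def_p(G;X,R)`, `G` surjects onto `(C_p)^n`. -/
theorem pRank_ge_pDef {X : Type} [Fintype X] (p : ℕ) (hp : p.Prime)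
    (R : Set (FreeGroup X))
    (hsum : Summable fun r : R => ((p : ℝ) ^ (nuP p (r : FreeGroup X)))⁻¹)
    (n : ℕ) (hn : (n : ℝ) ≤ pDef p R) :
    ∃ f : PresentedGroup R →* (Fin n → Multiplicative (ZMod p)),
      Function.Surjective f := by
  haveI : Fact p.Prime := ⟨hp⟩
  haveI : NeZero p := ⟨hp.ne_zero⟩
  classical
  set F := fun r : R => ((p : ℝ) ^ (nuP p (r : FreeGroup X)))⁻¹ with hF
  -- the mod-p abelianization map
  set e : X → Multiplicative (X → ZMod p) :=
    fun x => Multiplicative.ofAdd (Pi.single x 1) with he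
  set θ : FreeGroup X →* Multiplicative (X → ZMod p) := FreeGroup.lift e with hθdef
  -- θ is surjective
  have hθsurj : Function.Surjective θ := by
    have hrange : θ.range = Subgroup.closure (Set.range e) := FreeGroup.range_lift_eq_closure
    rw [← MonoidHom.range_eq_top, hrange, eq_top_iff]
    intro v _
    have hv : v = Multiplicative.ofAdd (∑ x : X, Pi.single x (v.toAdd x)) := by
      rw [Finset.univ_sum_single]; rfl
    rw [hv, ofAdd_sum]
    refine Subgroup.prod_mem _ fun x _ => ?_
    have hx : Multiplicative.ofAdd (Pi.single x (v.toAdd x)) = (e x) ^ (v.toAdd x).val := by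
      rw [he, ← ofAdd_nsmul]
      congr 1
      funext y
      by_cases hxy : y = x <;>
        simp [Pi.single_apply, hxy, nsmul_eq_mul, ZMod.natCast_val, ZMod.cast_id]
    rw [hx]
    exact Subgroup.pow_mem _ (Subgroup.subset_closure (Set.mem_range_self x)) _
  -- the "bad" relators
  set S : Set R := {r : R | θ (r : FreeGroup X) ≠ 1} with hS
  have hF1 : ∀ r ∈ S, F r = 1 := by
    intro r hr
    rw [hF]
    simp only
    rw [aux_nuP_eq_zero hp θ _ hr, pow_zero, inv_one]
  have hFnonneg : ∀ r : R, 0 ≤ F r := by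
    intro r
    positivity
  -- S is finite
  have hSfin : S.Finite := by
    have h0 := hsum.tendsto_cofinite_zero
    have h1 : ∀ᶠ r : R in Filter.cofinite, F r < 1 :=
      h0.eventually_lt_const one_pos
    refine (Filter.eventually_cofinite.mp h1).subset ?_
    intro r hr
    simp only [Set.mem_setOf_eq, not_lt]
    rw [hF1 r hr]
  -- cardinality bound
  set m := hSfin.toFinset.card with hm
  have hcard : m + n ≤ Fintype.card X := by
    have hsumge : (m : ℝ) ≤ ∑' r : R, F r := by
      have h2 : ∑ r ∈ hSfin.toFinset, F r = m := by
        rw [Finset.sum_congr rfl fun r hr => hF1 r (hSfin.mem_toFinset.mp hr)]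
        simp [hm]
      calc (m : ℝ) = ∑ r ∈ hSfin.toFinset, F r := h2.symm
        _ ≤ ∑' r : R, F r := Summable.sum_le_tsum _ (fun r _ => hFnonneg r) hsum
    rw [pDef] at hn
    have : (m : ℝ) + (n : ℝ) ≤ (Fintype.card X : ℝ) := by linarith
    exact_mod_cast this
  -- the span of the images of the bad relators
  set g : R → (X → ZMod p) := fun r => (θ (r : FreeGroup X)).toAdd with hg
  set t : Finset (X → ZMod p) := hSfin.toFinset.image g with ht
  set W : Submodule (ZMod p) (X → ZMod p) := Submodule.span (ZMod p) (t : Set (X → ZMod p))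
    with hW
  have hWrank : Module.finrank (ZMod p) W ≤ m :=
    le_trans (finrank_span_finset_le_card t) (Finset.card_image_le)
  -- the quotient
  have hQrank : n ≤ Module.finrank (ZMod p) ((X → ZMod p) ⧸ W) := by
    have h3 := W.finrank_quotient_add_finrank
    have h4 : Module.finrank (ZMod p) (X → ZMod p) = Fintype.card X := Module.finrank_pi _
    omega
  -- the linear surjection
  set Q := (X → ZMod p) ⧸ W with hQ
  set L1 : Q ≃ₗ[ZMod p] (Fin (Module.finrank (ZMod p) Q) → ZMod p) :=
    (Module.finBasis (ZMod p) Q).equivFun with hL1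
  set L2 : (Fin (Module.finrank (ZMod p) Q) → ZMod p) →ₗ[ZMod p] (Fin n → ZMod p) :=
    LinearMap.funLeft (ZMod p) (ZMod p) (Fin.castLE hQrank) with hL2
  have hL2surj : Function.Surjective L2 :=
    LinearMap.funLeft_surjective_of_injective _ _ _ (Fin.castLE_injective hQrank)
  set L : (X → ZMod p) →ₗ[ZMod p] (Fin n → ZMod p) :=
    L2 ∘ₗ (L1 : Q →ₗ[ZMod p] _) ∘ₗ W.mkQ with hL
  have hLW : ∀ v ∈ W, L v = 0 := by
    intro v hv
    have : W.mkQ v = 0 := (Submodule.Quotient.mk_eq_zero W).mpr hv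
    simp [hL, LinearMap.comp_apply, this]
  have hLsurj : Function.Surjective L := by
    rw [hL]
    simp only [LinearMap.coe_comp]
    exact hL2surj.comp (L1.surjective.comp (Submodule.mkQ_surjective W))
  -- assemble the group homomorphism
  set μ : Multiplicative (X → ZMod p) →* (Fin n → Multiplicative (ZMod p)) :=
    (MulEquiv.piMultiplicative (fun _ : Fin n => ZMod p)).toMonoidHom.comp
      (AddMonoidHom.toMultiplicative L.toAddMonoidHom) with hμ
  have hμ1 : ∀ gg : Multiplicative (X → ZMod p), L gg.toAdd = 0 → μ gg = 1 := by
    intro gg hgg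
    have h5 : (AddMonoidHom.toMultiplicative L.toAddMonoidHom) gg = 1 := by
      show Multiplicative.ofAdd (L gg.toAdd) = 1
      rw [hgg]; rfl
    rw [hμ, MonoidHom.comp_apply, h5, map_one]
  have hμsurj : Function.Surjective μ := by
    intro y
    obtain ⟨v, hv⟩ := hLsurj (fun i => (y i).toAdd)
    refine ⟨Multiplicative.ofAdd v, ?_⟩
    have h6 : μ (Multiplicative.ofAdd v) =
        (MulEquiv.piMultiplicative fun _ : Fin n => ZMod p) (Multiplicative.ofAdd (L v)) := rfl
    rw [h6, hv]
    funext i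
    rfl
  set f : X → (Fin n → Multiplicative (ZMod p)) := fun x => μ (e x) with hf
  have hlift : FreeGroup.lift f = μ.comp θ := by
    ext x
    simp [hf, hθdef]
  have hrels : ∀ r ∈ R, FreeGroup.lift f r = 1 := by
    intro r hr
    rw [hlift, MonoidHom.comp_apply]
    by_cases hθr : θ r = 1
    · rw [hθr, map_one]
    · refine hμ1 _ ?_
      apply hLW
      apply Submodule.subset_span
      rw [ht]
      simp only [Finset.coe_image, Set.mem_image]
      exact ⟨⟨r, hr⟩, by simp [hS, Set.Finite.coe_toFinset, hθr, hg]⟩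
  refine ⟨PresentedGroup.toGroup hrels, ?_⟩
  intro y
  obtain ⟨w, hw⟩ := (hμsurj.comp hθsurj) y
  refine ⟨PresentedGroup.mk R w, ?_⟩
  have : (PresentedGroup.toGroup hrels).comp (PresentedGroup.mk R) = FreeGroup.lift f := rfl
  calc (PresentedGroup.toGroup hrels) (PresentedGroup.mk R w)
      = FreeGroup.lift f w := by rw [← MonoidHom.comp_apply, this]
    _ = y := by rw [hlift]; exact hw
end

section
/- If G is a group with p-rank d_p(G) ≤ 1, then G is not p-large. -/
open Function

section Auxiliary

lemma vs_surj (p : ℕ) [Fact p.Prime] (V : Type*) [AddCommGroup V] [Module (ZMod p) V]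
    [Finite V] (hcard : p < Nat.card V) :
    ∃ g : V →+ (Fin 2 → ZMod p), Surjective g := by
  haveI : Fintype V := Fintype.ofFinite V
  have hcard2 : Fintype.card V = p ^ Module.finrank (ZMod p) V := by
    have := Module.card_eq_pow_finrank (K := ZMod p) (V := V)
    rwa [ZMod.card] at this
  have hcc : Nat.card V = Fintype.card V := Nat.card_eq_fintype_card
  have hrank : 2 ≤ Module.finrank (ZMod p) V := by
    by_contra hlt
    push_neg at hlt
    have h1 : Module.finrank (ZMod p) V ≤ 1 := by omega
    have h2 : p ^ Module.finrank (ZMod p) V ≤ p := by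
      simpa using Nat.pow_le_pow_right (Fact.out (p := p.Prime)).pos h1
    omega
  let bas := Module.finBasis (ZMod p) V
  let L : V →ₗ[ZMod p] (Fin 2 → ZMod p) :=
    (LinearMap.funLeft (ZMod p) (ZMod p) (Fin.castLE hrank)).comp bas.equivFun.toLinearMap
  have hLs : Surjective (⇑L) := by
    rw [show ⇑L = (LinearMap.funLeft (ZMod p) (ZMod p) (Fin.castLE hrank)) ∘ bas.equivFun from rfl]
    exact (LinearMap.funLeft_surjective_of_injective (ZMod p) (ZMod p) _
      (Fin.castLE_injective hrank)).comp bas.equivFun.surjective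
  exact ⟨L.toAddMonoidHom, hLs⟩

lemma elemAb_surj (p : ℕ) (hp : p.Prime) (B : Type*) [CommGroup B] [Finite B]
    (hexp : ∀ b : B, b ^ p = 1) (hcard : p < Nat.card B) :
    ∃ g : B →* (Fin 2 → Multiplicative (ZMod p)), Surjective g := by
  haveI : Fact p.Prime := ⟨hp⟩
  haveI : NeZero p := ⟨hp.ne_zero⟩
  letI : Module (ZMod p) (Additive B) :=
    AddCommMonoid.zmodModule (n := p) (fun x => hexp x.toMul)
  have hcardA : p < Nat.card (Additive B) := by
    rwa [Nat.card_congr Additive.ofMul.symm]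
  obtain ⟨g, hg⟩ := vs_surj p (Additive B) hcardA
  refine ⟨(MulEquiv.funMultiplicative (Fin 2) (ZMod p)).toMonoidHom.comp
    ((AddMonoidHom.toMultiplicative g).comp
      (MulEquiv.multiplicativeAdditive B).symm.toMonoidHom), ?_⟩
  exact (MulEquiv.funMultiplicative _ _).surjective.comp
    (hg.comp (MulEquiv.multiplicativeAdditive B).symm.surjective)

lemma abelian_cyclic (p : ℕ) (hp : p.Prime) (Q : Type*) [CommGroup Q] [Finite Q]
    (hQ : IsPGroup p Q)
    (h : ¬ ∃ g : Q →* (Fin 2 → Multiplicative (ZMod p)), Surjective g) : IsCyclic Q := by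
  haveI : Fact p.Prime := ⟨hp⟩
  -- Step 1: the p-torsion subgroup has order at most p
  have hΩ : Nat.card (powMonoidHom p : Q →* Q).ker ≤ p := by
    by_contra hlt
    push_neg at hlt
    set f : Q →* Q := powMonoidHom p with hf
    set R : Subgroup Q := f.range with hR
    have e1 : f.ker.index = Nat.card f.range := Subgroup.index_ker f
    have e2 : Nat.card f.ker * f.ker.index = Nat.card Q := f.ker.card_mul_index
    have e3 : Nat.card f.range * f.range.index = Nat.card Q := f.range.card_mul_index
    have hpos : 0 < Nat.card f.range := Nat.card_pos
    have e4 : Nat.card f.ker * Nat.card f.range = Nat.card Q := by rw [← e1]; exact e2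
    have e5 : Nat.card f.range * R.index = Nat.card f.range * Nat.card f.ker := by
      rw [e3, ← e4]; ring
    have ecard : Nat.card (Q ⧸ R) = Nat.card f.ker := by
      rw [← Subgroup.index_eq_card]
      exact Nat.eq_of_mul_eq_mul_left hpos e5
    have hexp : ∀ b : Q ⧸ R, b ^ p = 1 := by
      intro b
      induction b using QuotientGroup.induction_on with
      | H q =>
        rw [← QuotientGroup.mk_pow, QuotientGroup.eq_one_iff]
        exact ⟨q, rfl⟩
    have hcard : p < Nat.card (Q ⧸ R) := by omega
    obtain ⟨g, hg⟩ := elemAb_surj p hp (Q ⧸ R) hexp hcard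
    exact h ⟨g.comp (QuotientGroup.mk' R), hg.comp (QuotientGroup.mk'_surjective R)⟩
  -- Step 2: the `p^j` torsion has order at most `p^j`
  have hS : ∀ j : ℕ, Nat.card (powMonoidHom (p ^ j) : Q →* Q).ker ≤ p ^ j := by
    intro j
    induction j with
    | zero =>
      have : (powMonoidHom (p ^ 0) : Q →* Q).ker = ⊥ := by
        ext x
        simp [MonoidHom.mem_ker, powMonoidHom]
      rw [this, Subgroup.card_bot, pow_zero]
    | succ j ih =>
      set S : Subgroup Q := (powMonoidHom (p ^ (j+1)) : Q →* Q).ker with hSdef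
      let ρ : S →* Q := (powMonoidHom p).comp S.subtype
      have e1 : ρ.ker.index = Nat.card ρ.range := Subgroup.index_ker ρ
      have e2 : Nat.card ρ.ker * ρ.ker.index = Nat.card S := ρ.ker.card_mul_index
      have hmem : ∀ x : ρ.ker, (x : S).1 ∈ (powMonoidHom p : Q →* Q).ker :=
        fun x => x.2
      have hker : Nat.card ρ.ker ≤ p := by
        refine le_trans (Nat.card_le_card_of_injective
          (fun x => (⟨(x : S).1, hmem x⟩ : (powMonoidHom p : Q →* Q).ker)) ?_) hΩ
        intro a b hab
        ext
        simpa using congrArg Subtype.val hab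
      have hrange : Nat.card ρ.range ≤ p ^ j := by
        refine le_trans (Subgroup.card_le_of_le ?_) ih
        rintro x ⟨y, rfl⟩
        have hy : (y : Q) ^ (p ^ (j+1)) = 1 := y.2
        show ((y : Q) ^ p) ^ p ^ j = 1
        rw [← pow_mul, ← pow_succ']
        exact hy
      calc Nat.card S = Nat.card ρ.ker * Nat.card ρ.range := by rw [← e1, e2]
        _ ≤ p * p ^ j := Nat.mul_le_mul hker hrange
        _ = p ^ (j + 1) := by ring
  -- Step 3: cyclicity criterion
  haveI : Fintype Q := Fintype.ofFinite Q
  haveI : DecidableEq Q := Classical.decEq Q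
  apply isCyclic_of_card_pow_eq_one_le
  intro n hn
  set j := n.factorization p with hj
  have hsub : ∀ a : Q, a ^ n = 1 → a ∈ (powMonoidHom (p ^ j) : Q →* Q).ker := by
    intro a ha
    obtain ⟨i, hi⟩ := (IsPGroup.iff_orderOf.mp hQ) a
    have hdvd : p ^ i ∣ n := hi ▸ orderOf_dvd_of_pow_eq_one ha
    have hij : i ≤ j := (Nat.Prime.pow_dvd_iff_le_factorization hp hn.ne').mp hdvd
    simp only [MonoidHom.mem_ker, powMonoidHom, MonoidHom.coe_mk, OneHom.coe_mk]
    exact orderOf_dvd_iff_pow_eq_one.mp (hi ▸ pow_dvd_pow p hij)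
  show (Finset.univ.filter fun a : Q => a ^ n = 1).card ≤ n
  calc (Finset.univ.filter fun a : Q => a ^ n = 1).card
      ≤ (Finset.univ.filter fun a : Q => a ∈ (powMonoidHom (p ^ j) : Q →* Q).ker).card := by
        apply Finset.card_le_card
        intro a ha
        simp only [Finset.mem_filter, Finset.mem_univ, true_and] at ha ⊢
        exact hsub a ha
    _ = Nat.card (powMonoidHom (p ^ j) : Q →* Q).ker := by
        rw [Nat.card_eq_fintype_card, Fintype.card_subtype]
    _ ≤ p ^ j := hS j
    _ ≤ n := Nat.le_of_dvd hn (Nat.ordProj_dvd n p)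

lemma pgroup_cyclic (p : ℕ) (hp : p.Prime) :
    ∀ (n : ℕ) (Q : Type*) [Group Q] [Finite Q], Nat.card Q = n → IsPGroup p Q →
      (¬ ∃ g : Q →* (Fin 2 → Multiplicative (ZMod p)), Surjective g) → IsCyclic Q := by
  intro n
  induction n using Nat.strong_induction_on with
  | _ n ih =>
    intro Q _ _ hn hQ h
    haveI : Fact p.Prime := ⟨hp⟩
    rcases subsingleton_or_nontrivial Q with hs | hs
    · infer_instance
    · haveI : Nontrivial (Subgroup.center Q) := hQ.center_nontrivial
      have hZ : 2 ≤ Nat.card (Subgroup.center Q) := Finite.one_lt_card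
      have hcardQ : 1 ≤ n := by
        have : 0 < Nat.card Q := Nat.card_pos
        omega
      have hch : Nat.card (Subgroup.center Q) * (Subgroup.center Q).index = Nat.card Q :=
        (Subgroup.center Q).card_mul_index
      have hidx : Nat.card (Q ⧸ Subgroup.center Q) < n := by
        rw [← Subgroup.index_eq_card]
        have h1 : 1 ≤ (Subgroup.center Q).index := by
          have : (Subgroup.center Q).index ≠ 0 := Subgroup.FiniteIndex.index_ne_zero
          omega
        nlinarith [hch, hn]
      have hcyc : IsCyclic (Q ⧸ Subgroup.center Q) := by
        refine ih _ hidx _ rfl (hQ.to_quotient _) ?_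
        rintro ⟨g, hg⟩
        exact h ⟨g.comp (QuotientGroup.mk' _), hg.comp (QuotientGroup.mk'_surjective _)⟩
      letI : CommGroup Q := commGroupOfCyclicCenterQuotient
        (QuotientGroup.mk' (Subgroup.center Q)) (le_of_eq (QuotientGroup.ker_mk' _))
      exact abelian_cyclic p hp Q hQ h

section Tfacts
variable (p : ℕ) [Fact p.Prime]

lemma T_pow_p (t : Fin 2 → Multiplicative (ZMod p)) : t ^ p = 1 := by
  funext i
  show (t i) ^ p = 1
  have : (Multiplicative.toAdd (t i)) * (p : ZMod p) = 0 := by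
    rw [ZMod.natCast_self, mul_zero]
  rw [← ofAdd_toAdd (t i), ← ofAdd_nsmul]
  rw [show p • (Multiplicative.toAdd (t i)) = 0 by
    rw [nsmul_eq_mul, mul_comm]
    simpa using this]
  rfl

lemma T_card : Nat.card (Fin 2 → Multiplicative (ZMod p)) = p ^ 2 := by
  rw [Nat.card_pi]
  simp [Nat.card_eq_fintype_card, ZMod.card]

lemma T_not_cyclic : ¬ IsCyclic (Fin 2 → Multiplicative (ZMod p)) := by
  intro hcyc
  obtain ⟨g, hg⟩ := hcyc.exists_generator
  have h1 : orderOf g ∣ p := orderOf_dvd_of_pow_eq_one (T_pow_p p g)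
  have h2 : orderOf g = p ^ 2 := by
    rw [← T_card p]
    exact orderOf_eq_card_of_forall_mem_zpowers hg
  have hp : 1 < p := (Fact.out (p := p.Prime)).one_lt
  have := Nat.le_of_dvd (by omega) h1
  nlinarith [h2 ▸ this]

lemma freeGroup_surj :
    ∃ s : FreeGroup (Fin 2) →* (Fin 2 → Multiplicative (ZMod p)), Surjective s := by
  refine ⟨FreeGroup.lift (fun i => Pi.mulSingle i (Multiplicative.ofAdd (1 : ZMod p))), ?_⟩
  intro t
  refine ⟨FreeGroup.of 0 ^ (Multiplicative.toAdd (t 0)).val *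
          FreeGroup.of 1 ^ (Multiplicative.toAdd (t 1)).val, ?_⟩
  rw [map_mul, map_pow, map_pow, FreeGroup.lift_apply_of, FreeGroup.lift_apply_of]
  funext j
  fin_cases j <;>
  · simp only [Pi.mul_apply, Pi.pow_apply]
    simp [Pi.mulSingle, Function.update, ← ofAdd_nsmul]

end Tfacts

end Auxiliary

/-- A group `G` is `p`-large if some normal subgroup of index a power of `p`
surjects onto a non-abelian free group (equivalently, onto `F₂`). -/
def IsPLarge (p : ℕ) (G : Type*) [Group G] : Prop :=
  ∃ N : Subgroup G, N.Normal ∧ (∃ k : ℕ, N.index = p ^ k) ∧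
    ∃ f : N →* FreeGroup (Fin 2), Function.Surjective f

/-- If the `p`-rank of `G` is at most `1` (i.e. `G` does not surject onto
`C_p × C_p`), then `G` is not `p`-large. -/
theorem not_pLarge_of_pRank_le_one {G : Type*} [Group G] (p : ℕ) (hp : p.Prime)
    (hrank : ¬∃ f : G →* (Fin 2 → Multiplicative (ZMod p)), Function.Surjective f) :
    ¬ IsPLarge p G := by
  haveI : Fact p.Prime := ⟨hp⟩
  rintro ⟨N, hN, ⟨k, hk⟩, f, hf⟩
  haveI := hN
  obtain ⟨s, hs⟩ := freeGroup_surj p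
  set φ : N →* (Fin 2 → Multiplicative (ZMod p)) := s.comp f with hφdef
  have hφs : Surjective φ := hs.comp hf
  set K₀ : Subgroup G := φ.ker.map N.subtype with hKdef
  have hK₀N : K₀ ≤ N := by
    rintro x ⟨y, _, rfl⟩
    exact y.2
  set C := K₀.normalCore with hCdef
  haveI : N.FiniteIndex := ⟨by rw [hk]; exact pow_ne_zero k hp.ne_zero⟩
  have hcomap : K₀.subgroupOf N = φ.ker := by
    rw [hKdef]
    exact Subgroup.comap_map_eq_self_of_injective N.subtype_injective _
  have hrel : K₀.relIndex N ≠ 0 := by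
    rw [Subgroup.relIndex, hcomap, Subgroup.index_ker]
    exact Nat.card_pos.ne'
  haveI : K₀.FiniteIndex := ⟨by
    rw [← Subgroup.relIndex_mul_index hK₀N]
    exact Nat.mul_ne_zero hrel Subgroup.FiniteIndex.index_ne_zero⟩
  haveI : C.FiniteIndex := Subgroup.finiteIndex_normalCore K₀
  haveI : Finite (G ⧸ C) := by
    have h0 : Nat.card (G ⧸ C) ≠ 0 := by
      rw [← Subgroup.index_eq_card]
      exact Subgroup.FiniteIndex.index_ne_zero
    exact (Nat.card_ne_zero.mp h0).2
  -- p-th powers of elements of N lie in C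
  have hNpC : ∀ x : G, x ∈ N → x ^ p ∈ C := by
    intro x hx
    show ∀ b : G, b * x ^ p * b⁻¹ ∈ K₀
    intro b
    have hbx : b * x * b⁻¹ ∈ N := hN.conj_mem x hx b
    have hpow : (b * x * b⁻¹) ^ p ∈ K₀ := by
      refine Subgroup.mem_map.mpr ⟨(⟨b * x * b⁻¹, hbx⟩ : N) ^ p, ?_, rfl⟩
      rw [MonoidHom.mem_ker, map_pow]
      exact T_pow_p p _
    rwa [conj_pow] at hpow
  -- G ⧸ C is a p-group
  have hQp : IsPGroup p (G ⧸ C) := by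
    intro q
    induction q using QuotientGroup.induction_on with
    | H g =>
      refine ⟨k + 1, ?_⟩
      have h1 : g ^ N.index ∈ N := Subgroup.pow_index_mem N g
      rw [hk] at h1
      rw [← QuotientGroup.mk_pow, QuotientGroup.eq_one_iff]
      rw [show g ^ p ^ (k + 1) = (g ^ p ^ k) ^ p by rw [← pow_mul, ← pow_succ]]
      exact hNpC _ h1
  -- G ⧸ C is not cyclic
  have hQnc : ¬ IsCyclic (G ⧸ C) := by
    intro hcyc
    set ψ : N →* G ⧸ C := (QuotientGroup.mk' C).comp N.subtype with hψdef
    have hker : ψ.ker ≤ φ.ker := by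
      intro x hx
      have hxC : (x : G) ∈ C := by
        rw [MonoidHom.mem_ker, hψdef, MonoidHom.comp_apply] at hx
        exact (QuotientGroup.eq_one_iff _).mp hx
      have hxK : (x : G) ∈ K₀ := K₀.normalCore_le hxC
      rw [← hcomap]
      exact hxK
    haveI : IsCyclic (N ⧸ ψ.ker) := by
      have e := QuotientGroup.quotientKerEquivRange ψ
      exact isCyclic_of_surjective e.symm e.symm.surjective
    have hsurj : Surjective (QuotientGroup.lift ψ.ker φ (fun n hn => hker hn)) := by
      intro t
      obtain ⟨n, rfl⟩ := hφs t
      exact ⟨QuotientGroup.mk n, rfl⟩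
    exact T_not_cyclic p (isCyclic_of_surjective _ hsurj)
  refine hQnc (pgroup_cyclic p hp (Nat.card (G ⧸ C)) (G ⧸ C) rfl hQp ?_)
  rintro ⟨g, hg⟩
  exact hrank ⟨g.comp (QuotientGroup.mk' C), hg.comp (QuotientGroup.mk'_surjective C)⟩
end

section
/- If G is p-large and H is a finite index subgroup of G, then H is p-large. -/
/-! Auxiliary lemmas -/

private def UA : (Matrix (Fin 2) (Fin 2) ℤ)ˣ :=
  ⟨!![1,1;0,1], !![1,-1;0,1],
   by simp [Matrix.mul_fin_two, ← Matrix.ext_iff, Fin.forall_fin_two, Matrix.one_fin_two],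
   by simp [Matrix.mul_fin_two, ← Matrix.ext_iff, Fin.forall_fin_two, Matrix.one_fin_two]⟩

private def UB : (Matrix (Fin 2) (Fin 2) ℤ)ˣ :=
  ⟨!![1,0;1,1], !![1,0;-1,1],
   by simp [Matrix.mul_fin_two, ← Matrix.ext_iff, Fin.forall_fin_two, Matrix.one_fin_two],
   by simp [Matrix.mul_fin_two, ← Matrix.ext_iff, Fin.forall_fin_two, Matrix.one_fin_two]⟩

private lemma UA_pow (m : ℕ) :
    ((UA ^ m : (Matrix (Fin 2) (Fin 2) ℤ)ˣ) : Matrix (Fin 2) (Fin 2) ℤ) = !![1, (m : ℤ); 0, 1] := by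
  induction m with
  | zero => simp [← Matrix.ext_iff, Fin.forall_fin_two, Matrix.one_fin_two]
  | succ n ih =>
    rw [pow_succ, Units.val_mul, ih,
      show (UA : Matrix (Fin 2) (Fin 2) ℤ) = !![1,1;0,1] from rfl, Matrix.mul_fin_two]
    push_cast
    simp [← Matrix.ext_iff, Fin.forall_fin_two]
    ring_nf

private lemma UB_pow (m : ℕ) :
    ((UB ^ m : (Matrix (Fin 2) (Fin 2) ℤ)ˣ) : Matrix (Fin 2) (Fin 2) ℤ) = !![1, 0; (m : ℤ), 1] := by
  induction m with
  | zero => simp [← Matrix.ext_iff, Fin.forall_fin_two, Matrix.one_fin_two]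
  | succ n ih =>
    rw [pow_succ, Units.val_mul, ih,
      show (UB : Matrix (Fin 2) (Fin 2) ℤ) = !![1,0;1,1] from rfl, Matrix.mul_fin_two]
    push_cast
    simp [← Matrix.ext_iff, Fin.forall_fin_two]

private lemma pow_noncomm (d : ℕ) (hd : d ≠ 0) :
    (FreeGroup.of (0 : Fin 2)) ^ d * (FreeGroup.of (1 : Fin 2)) ^ d ≠
    (FreeGroup.of (1 : Fin 2)) ^ d * (FreeGroup.of (0 : Fin 2)) ^ d := by
  intro h
  have h1 := congrArg (FreeGroup.lift (fun i : Fin 2 => if i = 0 then UA else UB)) h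
  simp only [map_mul, map_pow, FreeGroup.lift_apply_of] at h1
  norm_num at h1
  have h2 := congrArg
    (fun u : (Matrix (Fin 2) (Fin 2) ℤ)ˣ => (u : Matrix (Fin 2) (Fin 2) ℤ) 0 0) h1
  simp only [Units.val_mul, UA_pow, UB_pow, Matrix.mul_fin_two] at h2
  norm_num at h2
  exact hd (by exact_mod_cast h2)

private lemma freeGroup_commute {S : Type*} (hS : ∀ s t : S, s = t)
    (x y : FreeGroup S) : Commute x y := by
  induction x using FreeGroup.induction_on with
  | C1 => exact Commute.one_left y
  | of s =>
    induction y using FreeGroup.induction_on with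
    | C1 => exact Commute.one_right _
    | of t => rw [hS s t]
    | inv_of t h => exact h.inv_right
    | mul a b ha hb => exact ha.mul_right hb
  | inv_of s h => exact h.inv_left
  | mul a b ha hb => exact ha.mul_left hb

open scoped Classical in
private lemma exists_surj_of_ne {S : Type*} (s t : S) (hst : s ≠ t) :
    ∃ φ : FreeGroup S →* FreeGroup (Fin 2), Function.Surjective φ := by
  refine ⟨FreeGroup.lift (fun x => if x = s then FreeGroup.of 0 else
    if x = t then FreeGroup.of 1 else 1), ?_⟩
  rw [← MonoidHom.range_eq_top, eq_top_iff, ← FreeGroup.closure_range_of (Fin 2),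
    Subgroup.closure_le]
  rintro _ ⟨i, rfl⟩
  fin_cases i
  · exact ⟨FreeGroup.of s, by simp⟩
  · exact ⟨FreeGroup.of t, by simp [hst, hst.symm]⟩

/-- If `G` is `p`-large and `H ≤ G` has finite index, then `H` is `p`-large. -/
theorem pLarge_of_finiteIndex_subgroup {G : Type*} [Group G] (p : ℕ) (hp : p.Prime)
    (hG : IsPLarge p G) (H : Subgroup G) (hH : H.FiniteIndex) :
    IsPLarge p H := by
  classical
  obtain ⟨N, hN, ⟨k, hk⟩, f, hf⟩ := hG
  haveI := hH
  haveI := hN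
  refine ⟨N.subgroupOf H, hN.subgroupOf H, ?_, ?_⟩
  · have hdvd : (N.subgroupOf H).index ∣ p ^ k := by
      rw [show (N.subgroupOf H).index = N.relIndex H from rfl, ← hk]
      exact Subgroup.relIndex_dvd_index_of_normal N H
    obtain ⟨i, _, hi⟩ := (Nat.dvd_prime_pow hp).mp hdvd
    exact ⟨i, hi⟩
  · -- build the surjection
    let ι : (N.subgroupOf H) →* N :=
      { toFun := fun x => ⟨(x : H), x.2⟩
        map_one' := rfl
        map_mul' := fun _ _ => rfl }
    have hιrange : ι.range = H.subgroupOf N := by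
      ext y
      constructor
      · rintro ⟨x, rfl⟩
        exact (x : H).2
      · intro hy
        exact ⟨⟨⟨(y : G), hy⟩, y.2⟩, rfl⟩
    let g : (N.subgroupOf H) →* FreeGroup (Fin 2) := f.comp ι
    have hgrange : g.range = ι.range.map f := MonoidHom.range_comp f ι
    haveI : ι.range.FiniteIndex := by
      rw [hιrange]; infer_instance
    haveI hKfi : g.range.FiniteIndex := by
      refine ⟨fun h0 => ?_⟩
      have := Subgroup.index_map_dvd ι.range hf
      rw [← hgrange, h0, zero_dvd_iff] at this
      exact Subgroup.FiniteIndex.index_ne_zero this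
    set K := g.range with hK
    set d := K.normalCore.index with hd
    have hd0 : d ≠ 0 := Subgroup.FiniteIndex.index_ne_zero
    have hmem : ∀ z : FreeGroup (Fin 2), z ^ d ∈ K :=
      fun z => K.normalCore_le (K.normalCore.pow_index_mem z)
    obtain ⟨s, t, hst⟩ : ∃ s t : IsFreeGroup.Generators K, s ≠ t := by
      by_contra hcon
      push_neg at hcon
      set e := IsFreeGroup.toFreeGroup K
      have hcomm : ∀ x y : K, x * y = y * x := by
        intro x y
        apply e.injective
        rw [map_mul, map_mul]
        exact freeGroup_commute hcon (e x) (e y)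
      have := hcomm ⟨_, hmem (FreeGroup.of 0)⟩ ⟨_, hmem (FreeGroup.of 1)⟩
      have h2 : (FreeGroup.of (0 : Fin 2)) ^ d * (FreeGroup.of (1 : Fin 2)) ^ d =
          (FreeGroup.of (1 : Fin 2)) ^ d * (FreeGroup.of (0 : Fin 2)) ^ d :=
        congrArg Subtype.val this
      exact pow_noncomm d hd0 h2
    obtain ⟨φ, hφ⟩ := exists_surj_of_ne s t hst
    exact ⟨(φ.comp (IsFreeGroup.toFreeGroup K).toMonoidHom).comp g.rangeRestrict,
      hφ.comp ((IsFreeGroup.toFreeGroup K).surjective.comp g.rangeRestrict_surjective)⟩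
end

section
/- If N is a subnormal subgroup of G of index p^k and N is p-large, then G is p-large. -/
/-- `H` is normal in `K` (both viewed as subgroups of an ambient group):
`H ≤ K` and `K` normalises `H`. -/
def NormalIn {G : Type*} [Group G] (H K : Subgroup G) : Prop :=
  H ≤ K ∧ ∀ k ∈ K, ∀ h ∈ H, k * h * k⁻¹ ∈ H

/-- `H` is subnormal in `G`: there is a chain `H = H_n ⊴ H_{n-1} ⊴ ⋯ ⊴ H_0 = G`. -/
def Subnormal {G : Type*} [Group G] (H : Subgroup G) : Prop :=
  Relation.ReflTransGen NormalIn H ⊤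


open Subgroup

private lemma freeGroup_commute_of_subsingleton {S : Type*} [Subsingleton S]
    (z w : FreeGroup S) : Commute z w := by
  have key : ∀ (w : FreeGroup S) (x : S), Commute (FreeGroup.of x) w := by
    intro w x
    induction w using FreeGroup.induction_on with
    | C1 => exact Commute.one_right _
    | of y => exact (Subsingleton.elim x y) ▸ Commute.refl _
    | inv_of y h => exact h.inv_right
    | mul y z hy hz => exact hy.mul_right hz
  induction z using FreeGroup.induction_on with
  | C1 => exact Commute.one_left _
  | of x => exact key w x
  | inv_of x h => exact (key w x).inv_left
  | mul x y hx hy => exact hx.mul_left hy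

private def Lmat : Matrix.SpecialLinearGroup (Fin 2) ℤ :=
  ⟨!![1, 0; 1, 1], by simp [Matrix.det_fin_two_of]⟩

private lemma coe_Lmat_pow (t : ℕ) :
    ((Lmat ^ t : Matrix.SpecialLinearGroup (Fin 2) ℤ) : Matrix (Fin 2) (Fin 2) ℤ)
      = !![1, 0; (t : ℤ), 1] := by
  induction t with
  | zero => simp [Matrix.one_fin_two]
  | succ n ih =>
      rw [pow_succ, Matrix.SpecialLinearGroup.coe_mul, ih]
      simp [Lmat, Matrix.mul_fin_two]

private lemma coe_Tmat_pow (s : ℕ) :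
    ((ModularGroup.T ^ s : Matrix.SpecialLinearGroup (Fin 2) ℤ) : Matrix (Fin 2) (Fin 2) ℤ)
      = !![1, (s : ℤ); 0, 1] := by
  rw [← zpow_natCast]
  exact ModularGroup.coe_T_zpow s

private lemma freeGroup_pow_not_commute {s t : ℕ} (hs : 0 < s) (ht : 0 < t) :
    ¬ Commute ((FreeGroup.of (0 : Fin 2)) ^ s) ((FreeGroup.of (1 : Fin 2)) ^ t) := by
  intro hc
  classical
  let φ : FreeGroup (Fin 2) →* Matrix.SpecialLinearGroup (Fin 2) ℤ :=
    FreeGroup.lift (fun i => if i = 0 then ModularGroup.T else Lmat)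
  have hc' : ModularGroup.T ^ s * Lmat ^ t = Lmat ^ t * ModularGroup.T ^ s := by
    have h0 : φ (FreeGroup.of (0 : Fin 2)) = ModularGroup.T := by simp [φ]
    have h1 : φ (FreeGroup.of (1 : Fin 2)) = Lmat := by simp [φ]
    have := congrArg φ hc
    simpa [map_mul, map_pow, h0, h1] using this
  have hmat := congrArg (fun M : Matrix.SpecialLinearGroup (Fin 2) ℤ =>
    (M : Matrix (Fin 2) (Fin 2) ℤ) 0 0) hc'
  simp only [Matrix.SpecialLinearGroup.coe_mul, coe_Lmat_pow, coe_Tmat_pow,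
    Matrix.mul_fin_two] at hmat
  norm_num at hmat
  rcases hmat with h | h
  · exact hs.ne' (by exact_mod_cast h)
  · exact ht.ne' (by exact_mod_cast h)

private lemma freeGroup_finiteIndex_surj (H : Subgroup (FreeGroup (Fin 2)))
    (hH : H.index ≠ 0) :
    ∃ f : H →* FreeGroup (Fin 2), Function.Surjective f := by
  classical
  obtain ⟨s, hs, -, hsm⟩ := Subgroup.exists_pow_mem_of_index_ne_zero hH (FreeGroup.of 0)
  obtain ⟨t, ht, -, htm⟩ := Subgroup.exists_pow_mem_of_index_ne_zero hH (FreeGroup.of 1)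
  set u : H := ⟨_, hsm⟩ with hu
  set v : H := ⟨_, htm⟩ with hv
  have huv : ¬ Commute u v := by
    intro h
    exact freeGroup_pow_not_commute hs ht (congrArg Subtype.val h)
  set S := IsFreeGroup.Generators H with hSdef
  let e : H ≃* FreeGroup S := IsFreeGroup.toFreeGroup H
  have hS : ∃ a b : S, a ≠ b := by
    by_contra hcon
    push_neg at hcon
    haveI : Subsingleton S := ⟨fun a b => hcon a b⟩
    apply huv
    have h1 : Commute (e u) (e v) := freeGroup_commute_of_subsingleton _ _
    have := congrArg e.symm h1
    exact (by simpa [map_mul] using this : u * v = v * u)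
  obtain ⟨a, b, hab⟩ := hS
  let g : S → FreeGroup (Fin 2) := fun x =>
    if x = a then FreeGroup.of 0 else if x = b then FreeGroup.of 1 else 1
  let π : FreeGroup S →* FreeGroup (Fin 2) := FreeGroup.lift g
  have hπ : Function.Surjective π := by
    intro w
    have hw : w ∈ π.range := by
      induction w using FreeGroup.induction_on with
      | C1 => exact one_mem _
      | of x =>
          fin_cases x
          · exact ⟨FreeGroup.of a, by show FreeGroup.lift g (FreeGroup.of a) = _; simp [g]⟩
          · exact ⟨FreeGroup.of b, by show FreeGroup.lift g (FreeGroup.of b) = _; rw [FreeGroup.lift_apply_of]; simp only [g, if_neg (Ne.symm hab)]; rfl⟩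
      | inv_of x h => exact inv_mem h
      | mul x y hx hy => exact mul_mem hx hy
    exact hw
  exact ⟨π.comp e.toMonoidHom, hπ.comp e.surjective⟩



private lemma index_iInf_pPow {X : Type*} [Group X] {p : ℕ} (hp : p.Prime)
    {ι : Type*} [Finite ι] (f : ι → Subgroup X) (hnorm : ∀ i, (f i).Normal)
    (hidx : ∀ i, ∃ k, (f i).index = p ^ k) :
    ∃ m, (⨅ i, f i).index = p ^ m := by
  classical
  haveI : Fintype ι := Fintype.ofFinite ι
  have key : ∀ s : Finset ι, ∃ m, (⨅ i ∈ s, f i).index = p ^ m := by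
    intro s
    induction s using Finset.induction_on with
    | empty => exact ⟨0, by simp⟩
    | @insert a s ha ih =>
        obtain ⟨m, hm⟩ := ih
        rw [Finset.iInf_insert]
        set T : Subgroup X := ⨅ i ∈ s, f i with hT
        have h1 : (f a ⊓ T).relIndex T * T.index = (f a ⊓ T).index :=
          relIndex_mul_index inf_le_right
        rw [inf_relIndex_right] at h1
        haveI := hnorm a
        obtain ⟨ka, hka⟩ := hidx a
        have h2 : (f a).relIndex T ∣ p ^ ka := hka ▸ relIndex_dvd_index_of_normal (f a) T
        obtain ⟨j, -, hj⟩ := (Nat.dvd_prime_pow hp).mp h2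
        exact ⟨j + m, by rw [← h1, hj, hm, pow_add]⟩
  obtain ⟨m, hm⟩ := key Finset.univ
  exact ⟨m, by simpa using hm⟩

private lemma isPLarge_congr {G G' : Type*} [Group G] [Group G'] {p : ℕ}
    (e : G ≃* G') (h : IsPLarge p G) : IsPLarge p G' := by
  obtain ⟨N, hNnorm, ⟨k, hk⟩, f, hf⟩ := h
  refine ⟨N.map e.toMonoidHom, hNnorm.map e.toMonoidHom e.surjective, ⟨k, ?_⟩,
    f.comp (N.equivMapOfInjective e.toMonoidHom e.injective).symm.toMonoidHom,
    hf.comp (MulEquiv.surjective _)⟩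
  rw [N.index_map_of_injective e.injective, MonoidHom.range_eq_top.2 e.surjective,
    index_top, mul_one, hk]

private lemma pLarge_of_normal_step {G : Type*} [Group G] {p : ℕ} (hp : p.Prime)
    (H : Subgroup G) (hnorm : H.Normal) {k : ℕ} (hk : H.index = p ^ k)
    (hH : IsPLarge p H) : IsPLarge p G := by
  classical
  obtain ⟨A, hAnorm, ⟨j, hAidx⟩, f, hf⟩ := hH
  let A' : Subgroup G := A.map H.subtype
  have hA'H : A' ≤ H := by
    rintro x ⟨y, hy, rfl⟩
    exact y.2
  have hA'idx : A'.index = p ^ (j + k) := by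
    rw [Subgroup.index_map_subtype, hAidx, hk, pow_add]
  have hconjH : ∀ h ∈ H, ∀ x ∈ A', h * x * h⁻¹ ∈ A' := by
    rintro h hh x ⟨y, hy, rfl⟩
    exact ⟨⟨h, hh⟩ * y * ⟨h, hh⟩⁻¹, hAnorm.conj_mem y hy ⟨h, hh⟩, rfl⟩
  let c' : G → Subgroup G := fun g => A'.map (MulAut.conj g).toMonoidHom
  have hc'mem : ∀ g x, x ∈ c' g ↔ g⁻¹ * x * g ∈ A' := by
    intro g x
    constructor
    · rintro ⟨y, hy, rfl⟩
      have heq : g⁻¹ * (MulAut.conj g).toMonoidHom y * g = y := by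
        simp only [MulEquiv.coe_toMonoidHom, MulAut.conj_apply]
        group
      rwa [heq]
    · intro hx
      refine ⟨g⁻¹ * x * g, hx, ?_⟩
      simp only [MulEquiv.coe_toMonoidHom, MulAut.conj_apply]
      group
  have hc'coset : ∀ g h, h ∈ H → c' (g * h) = c' g := by
    intro g h hh
    ext x
    rw [hc'mem, hc'mem]
    constructor
    · intro hx
      have h2 := hconjH h hh _ hx
      have heq : h * ((g * h)⁻¹ * x * (g * h)) * h⁻¹ = g⁻¹ * x * g := by group
      rwa [heq] at h2
    · intro hx
      have h2 := hconjH h⁻¹ (inv_mem hh) _ hx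
      have heq : h⁻¹ * (g⁻¹ * x * g) * h⁻¹⁻¹ = (g * h)⁻¹ * x * (g * h) := by group
      rwa [heq] at h2
  let c : G ⧸ H → Subgroup G := Quotient.lift c' (by
    intro a b hab
    have hab' : a⁻¹ * b ∈ H := (QuotientGroup.leftRel_apply).mp hab
    rw [show b = a * (a⁻¹ * b) from by group, hc'coset a _ hab'])
  have hcmk : ∀ g : G, c (QuotientGroup.mk g) = c' g := fun g => rfl
  let L : Subgroup G := ⨅ q : G ⧸ H, c q
  have hLmem : ∀ x, x ∈ L ↔ ∀ g : G, x ∈ c' g := by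
    intro x
    rw [Subgroup.mem_iInf]
    constructor
    · intro hx g
      have := hx (QuotientGroup.mk g)
      rwa [hcmk] at this
    · intro hx q
      refine QuotientGroup.induction_on q ?_
      intro z
      rw [hcmk]
      exact hx z
  have hLA' : L ≤ A' := by
    intro x hx
    have h1 := (hLmem x).mp hx 1
    rw [hc'mem] at h1
    simpa using h1
  have hLnorm : L.Normal := by
    constructor
    intro n hn g
    refine (hLmem _).mpr fun a => ?_
    rw [hc'mem]
    have hn' := (hLmem n).mp hn (g⁻¹ * a)
    rw [hc'mem] at hn'
    have heq : (g⁻¹ * a)⁻¹ * n * (g⁻¹ * a) = a⁻¹ * (g * n * g⁻¹) * a := by group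
    rwa [heq] at hn'
  have hLle_H : L ≤ H := hLA'.trans hA'H
  have hpk0 : (p : ℕ) ^ k ≠ 0 := pow_ne_zero k hp.ne_zero
  haveI : Fintype (G ⧸ H) := H.fintypeOfIndexNeZero (by rw [hk]; exact hpk0)
  have hcle : ∀ g : G, c' g ≤ H := by
    intro g x hx
    rw [hc'mem] at hx
    rw [show x = g * (g⁻¹ * x * g) * g⁻¹ from by group]
    exact hnorm.conj_mem _ (hA'H hx) g
  have hcidx : ∀ g : G, (c' g).index = p ^ (j + k) := by
    intro g
    rw [Subgroup.index_map_of_injective _ (MulAut.conj g).injective,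
      MonoidHom.range_eq_top.2 (MulAut.conj g).surjective, Subgroup.index_top, mul_one, hA'idx]
  have hcnorm : ∀ g : G, ((c' g).subgroupOf H).Normal := by
    intro g
    constructor
    rintro ⟨n, hnH⟩ hn ⟨h, hh⟩
    rw [Subgroup.mem_subgroupOf] at hn ⊢
    simp only [Subgroup.coe_mul, InvMemClass.coe_inv]
    rw [hc'mem] at hn ⊢
    have hgh : g⁻¹ * h * g ∈ H := by
      have := hnorm.conj_mem h hh g⁻¹
      simpa using this
    have h2 := hconjH _ hgh _ hn
    have heq : (g⁻¹ * h * g) * (g⁻¹ * n * g) * (g⁻¹ * h * g)⁻¹ = g⁻¹ * (h * n * h⁻¹) * g := by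
      group
    rwa [heq] at h2
  have hcsub : ∀ g : G, ∃ m, ((c' g).subgroupOf H).index = p ^ m := by
    intro g
    have h1 : (c' g).relIndex H * H.index = (c' g).index :=
      Subgroup.relIndex_mul_index (hcle g)
    have h2 : (c' g).relIndex H ∣ p ^ (j + k) := (hcidx g) ▸ Dvd.intro _ h1
    obtain ⟨m, -, hm⟩ := (Nat.dvd_prime_pow hp).mp h2
    exact ⟨m, hm⟩
  obtain ⟨m, hm⟩ := index_iInf_pPow hp (fun q : G ⧸ H => (c q).subgroupOf H)
    (fun q => QuotientGroup.induction_on q hcnorm)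
    (fun q => QuotientGroup.induction_on q hcsub)
  have hLsub : L.subgroupOf H = ⨅ q : G ⧸ H, (c q).subgroupOf H := by
    ext x
    simp [Subgroup.mem_subgroupOf, Subgroup.mem_iInf, L]
  have hLidx : L.index = p ^ (m + k) := by
    have h1 : L.relIndex H * H.index = L.index := Subgroup.relIndex_mul_index hLle_H
    rw [← h1, hk, pow_add]
    congr 1
    show (L.subgroupOf H).index = p ^ m
    rw [hLsub]
    exact hm
  let e1 : A ≃* A' := A.equivMapOfInjective H.subtype H.subtype_injective
  let f' : A' →* FreeGroup (Fin 2) := f.comp e1.symm.toMonoidHom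
  have hf' : Function.Surjective f' := hf.comp e1.symm.surjective
  let g0 : L →* FreeGroup (Fin 2) := f'.comp (Subgroup.inclusion hLA')
  have hrange : g0.range = (L.subgroupOf A').map f' := by
    rw [MonoidHom.range_comp, Subgroup.inclusion_range]
  haveI : L.Normal := hLnorm
  have hBidx : g0.range.index ≠ 0 := by
    intro h0
    have hd : g0.range.index ∣ L.index := by
      rw [hrange]
      calc ((L.subgroupOf A').map f').index ∣ (L.subgroupOf A').index :=
            Subgroup.index_map_dvd (L.subgroupOf A') hf'
        _ = L.relIndex A' := rfl
        _ ∣ L.index := Subgroup.relIndex_dvd_index_of_normal L A'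
    rw [h0, hLidx] at hd
    exact pow_ne_zero (m + k) hp.ne_zero (Nat.eq_zero_of_zero_dvd hd)
  obtain ⟨s, hs⟩ := freeGroup_finiteIndex_surj g0.range hBidx
  exact ⟨L, hLnorm, ⟨m + k, hLidx⟩, s.comp g0.rangeRestrict,
    hs.comp g0.rangeRestrict_surjective⟩

/-- If `N` is a subnormal subgroup of `G` of index `p^k` and `N` is `p`-large,
then `G` is `p`-large. -/
theorem pLarge_of_subnormal {G : Type*} [Group G] (p k : ℕ) (hp : p.Prime)
    (N : Subgroup G) (hsn : Subnormal N) (hidx : N.index = p ^ k)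
    (hN : IsPLarge p N) :
    IsPLarge p G := by
  have key : ∀ H : Subgroup G, Relation.ReflTransGen NormalIn H ⊤ →
      (∃ k', H.index = p ^ k') → IsPLarge p H → IsPLarge p G := by
    intro H hsnH
    induction hsnH using Relation.ReflTransGen.head_induction_on with
    | refl =>
        intro _ hTop
        exact isPLarge_congr Subgroup.topEquiv hTop
    | head hHK hK ih =>
        rename_i H' K'
        intro hidx' hH'
        obtain ⟨k', hk'⟩ := hidx'
        have hle : H' ≤ K' := hHK.1
        have hKdvd : K'.index ∣ p ^ k' := hk' ▸ Subgroup.index_dvd_of_le hle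
        obtain ⟨k2, -, hk2⟩ := (Nat.dvd_prime_pow hp).mp hKdvd
        have hrel : H'.relIndex K' ∣ p ^ k' :=
          hk' ▸ Dvd.intro _ (Subgroup.relIndex_mul_index hle)
        obtain ⟨k3, -, hk3⟩ := (Nat.dvd_prime_pow hp).mp hrel
        have hsubnorm : (H'.subgroupOf K').Normal := by
          constructor
          rintro ⟨n, hnK⟩ hn ⟨g, hg⟩
          rw [Subgroup.mem_subgroupOf] at hn ⊢
          exact hHK.2 g hg n hn
        have hcongr : IsPLarge p (H'.subgroupOf K') :=
          isPLarge_congr (Subgroup.subgroupOfEquivOfLe hle).symm hH'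
        have hKlarge : IsPLarge p K' :=
          pLarge_of_normal_step hp (H'.subgroupOf K') hsubnorm (k := k3) hk3 hcongr
        exact ih ⟨k2, hk2⟩ hKlarge
  exact key N hsn ⟨k, hidx⟩ hN
end

section
/- Any subnormal subgroup H of prime power index p^k in a group G contains a subgroup N of p-power index that is normal in G. -/
open Subgroup Pointwise

/-- Relative index is invariant under conjugation. -/
lemma relindex_conj_aux {G : Type*} [Group G] (g : G) (A B : Subgroup G) :
    (MulAut.conj g • A).relIndex (MulAut.conj g • B) = A.relIndex B := by
  have hinj : Function.Injective (MulAut.conj g).toMonoidHom := (MulAut.conj g).injective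
  have hA : Subgroup.comap (MulAut.conj g).toMonoidHom (MulAut.conj g • A) = A :=
    Subgroup.comap_map_eq_self_of_injective hinj A
  have hB : MulAut.conj g • B = Subgroup.map (MulAut.conj g).toMonoidHom B := rfl
  conv_rhs => rw [← hA]
  rw [Subgroup.relIndex_comap, ← hB]

/-- If `B` is normal when viewed inside `N` and `A ≤ N`, then the relative index of `B`
in `A` divides the relative index of `B` in `N`. -/
lemma relindex_dvd_relindex_of_normalIn {G : Type*} [Group G] {A B N : Subgroup G}
    (hA : A ≤ N) (hBn : (B.subgroupOf N).Normal) :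
    B.relIndex A ∣ B.relIndex N := by
  have := Subgroup.relIndex_dvd_index_of_normal (H := B.subgroupOf N) (K := A.subgroupOf N)
  rwa [Subgroup.relIndex_subgroupOf hA] at this

/-- Finite intersections of subgroups of `N` that are normal in `N` and have relative
index dividing a power of `p` again have relative index dividing a power of `p`. -/
lemma finset_inf_relindex {G : Type*} [Group G] {ι : Type*} (N : Subgroup G)
    (f : ι → Subgroup G) (pj : ℕ)
    (hnorm : ∀ i, ((f i).subgroupOf N).Normal)
    (hdvd : ∀ i, (f i).relIndex N ∣ pj) (s : Finset ι) :
    ∃ t : ℕ, (N ⊓ ⨅ i ∈ s, f i).relIndex N ∣ pj ^ t := by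
  classical
  induction s using Finset.induction_on with
  | empty =>
    refine ⟨0, ?_⟩
    simp [Subgroup.relIndex_self]
  | @insert i s hi ih =>
    obtain ⟨t, ht⟩ := ih
    refine ⟨t + 1, ?_⟩
    have hrw : (N ⊓ ⨅ j ∈ insert i s, f j) = f i ⊓ (N ⊓ ⨅ j ∈ s, f j) := by
      rw [Finset.iInf_insert, inf_left_comm]
    rw [hrw]
    set A := N ⊓ ⨅ j ∈ s, f j with hA
    have hAN : A ≤ N := inf_le_left
    have h1 : (f i ⊓ A).relIndex A * A.relIndex N = (f i ⊓ A).relIndex N :=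
      Subgroup.relIndex_mul_relIndex _ _ _ inf_le_right hAN
    have h2 : (f i ⊓ A).relIndex A = (f i).relIndex A := Subgroup.inf_relIndex_right _ _
    have h3 : (f i).relIndex A ∣ (f i).relIndex N :=
      relindex_dvd_relindex_of_normalIn hAN (hnorm i)
    rw [← h1, h2, pow_succ']
    exact mul_dvd_mul ((h3.trans (hdvd i))) ht

/-- The key induction: any subnormal subgroup of `p`-power index contains a normal
subgroup of `p`-power index. -/
lemma subnormal_aux {G : Type*} [Group G] (p : ℕ) (hp : p.Prime) (H : Subgroup G)
    (hsn : Subnormal H) :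
    ∀ k : ℕ, H.index = p ^ k →
      ∃ N : Subgroup G, N ≤ H ∧ N.Normal ∧ ∃ m : ℕ, N.index = p ^ m := by
  induction hsn using Relation.ReflTransGen.head_induction_on with
  | refl =>
    exact fun k _ => ⟨⊤, le_rfl, inferInstance, 0, by simp [Subgroup.index_top]⟩
  | @head H K hHK hK ih =>
    intro k hidx
    -- the index of K is also a power of p
    have hKdvd : K.index ∣ p ^ k := hidx ▸ Subgroup.index_dvd_of_le hHK.1
    obtain ⟨a, -, ha⟩ := (Nat.dvd_prime_pow hp).1 hKdvd
    obtain ⟨N, hNK, hNnormal, m, hNm⟩ := ih a ha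
    haveI : N.Normal := hNnormal
    -- H' = H ⊓ N is normal in N with p-power relative index
    set H' : Subgroup G := H ⊓ N with hH'def
    have hH'N : H' ≤ N := inf_le_right
    have hH'norm : ∀ n ∈ N, ∀ x ∈ H', n * x * n⁻¹ ∈ H' := by
      intro n hn x hx
      exact ⟨hHK.2 n (hNK hn) x hx.1, hNnormal.conj_mem x hx.2 n⟩
    have hHKnormal : (H.subgroupOf K).Normal := by
      constructor
      rintro x hx g
      simp only [Subgroup.mem_subgroupOf] at hx ⊢
      push_cast
      exact hHK.2 g g.2 x hx
    have hH'relindex : H'.relIndex N ∣ p ^ k := by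
      have e1 : H'.relIndex N = H.relIndex N := Subgroup.inf_relIndex_right _ _
      have e2 : H.relIndex N ∣ H.relIndex K :=
        relindex_dvd_relindex_of_normalIn hNK hHKnormal
      have e3 : H.relIndex K ∣ p ^ k := hidx ▸ Subgroup.relIndex_dvd_index_of_le hHK.1
      rw [e1]
      exact e2.trans e3
    -- the conjugates of H'
    set C : G → Subgroup G := fun g => MulAut.conj g • H' with hCdef
    have hCmem : ∀ g x, x ∈ C g ↔ g⁻¹ * x * g ∈ H' := by
      intro g x
      rw [hCdef]
      rw [Subgroup.mem_pointwise_smul_iff_inv_smul_mem]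
      simp [MulAut.smul_def]
    have hC1 : C 1 = H' := by
      ext x
      simp [hCmem]
    have hCle : ∀ g, C g ≤ N := by
      intro g x hx
      rw [hCmem] at hx
      have := hNnormal.conj_mem _ hx.2 g
      simpa [mul_assoc] using this
    have hCnorm : ∀ g, ((C g).subgroupOf N).Normal := by
      intro g
      constructor
      rintro x hx n
      simp only [Subgroup.mem_subgroupOf] at hx ⊢
      push_cast
      rw [hCmem] at hx ⊢
      have hn' : g⁻¹ * (n : G) * g ∈ N := by
        simpa using hNnormal.conj_mem _ n.2 g⁻¹
      have key := hH'norm (g⁻¹ * (n : G) * g) hn' _ hx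
      have heq : (g⁻¹ * (n : G) * g) * (g⁻¹ * x * g) * (g⁻¹ * (n : G) * g)⁻¹ =
          g⁻¹ * ((n : G) * x * (n : G)⁻¹) * g := by
        group
      rwa [heq] at key
    have hCrelindex : ∀ g, (C g).relIndex N ∣ p ^ k := by
      intro g
      have : (C g).relIndex N = H'.relIndex N := by
        conv_lhs => rw [← Subgroup.Normal.conj_smul_eq_self g N]
        exact relindex_conj_aux g H' N
      rw [this]
      exact hH'relindex
    -- M is the intersection of all conjugates of H'
    set M : Subgroup G := ⨅ g : G, C g with hMdef
    have hMle : ∀ g, M ≤ C g := fun g => iInf_le _ g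
    have hMH : M ≤ H := (hMle 1).trans (by rw [hC1]; exact inf_le_left)
    have hMN : M ≤ N := (hMle 1).trans (by rw [hC1]; exact hH'N)
    have hMnormal : M.Normal := by
      constructor
      intro x hx g
      rw [hMdef, Subgroup.mem_iInf] at hx ⊢
      intro y
      have := hx (g⁻¹ * y)
      rw [hCmem] at this ⊢
      have heq : (g⁻¹ * y)⁻¹ * x * (g⁻¹ * y) = y⁻¹ * (g * x * g⁻¹) * y := by
        group
      rwa [heq] at this
    -- G ⧸ N is finite
    haveI : Finite (G ⧸ N) := by
      refine Nat.finite_of_card_ne_zero ?_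
      have : Nat.card (G ⧸ N) = N.index := rfl
      rw [this, hNm]
      exact pow_ne_zero _ hp.ne_zero
    haveI := Fintype.ofFinite (G ⧸ N)
    -- M is a finite intersection of conjugates
    have hMeq : M = N ⊓ ⨅ q ∈ (Finset.univ : Finset (G ⧸ N)), C (Quotient.out q) := by
      apply le_antisymm
      · exact le_inf hMN (le_iInf fun q => le_iInf fun _ => hMle _)
      · rw [hMdef]
        refine le_iInf fun g => ?_
        intro x hx
        rw [Subgroup.mem_inf] at hx
        obtain ⟨hxN, hxC⟩ := hx
        simp only [Subgroup.mem_iInf] at hxC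
        have hxCg : x ∈ C (Quotient.out ((g : G ⧸ N))) :=
          hxC _ (Finset.mem_univ _)
        set q : G := Quotient.out ((g : G ⧸ N)) with hq
        have hqg : q⁻¹ * g ∈ N := by
          rw [← QuotientGroup.eq]
          rw [hq]
          exact QuotientGroup.out_eq' _
        rw [hCmem] at hxCg ⊢
        have key := hH'norm _ (N.inv_mem hqg) _ hxCg
        have heq : (q⁻¹ * g)⁻¹ * (q⁻¹ * x * q) * (q⁻¹ * g)⁻¹⁻¹ = g⁻¹ * x * g := by
          group
        rwa [heq] at key
    obtain ⟨t, ht⟩ := finset_inf_relindex N (fun q : G ⧸ N => C (Quotient.out q)) (p ^ k)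
      (fun q => hCnorm _) (fun q => hCrelindex _) Finset.univ
    rw [← hMeq] at ht
    rw [← pow_mul] at ht
    obtain ⟨t', -, ht'⟩ := (Nat.dvd_prime_pow hp).1 ht
    refine ⟨M, hMH, hMnormal, t' + m, ?_⟩
    rw [← Subgroup.relIndex_mul_index hMN, ht', hNm, ← pow_add]

/-- Any subnormal subgroup `H` of prime power index `p^k` in a group `G` contains a
subgroup `N` of `p`-power index which is normal in `G`. -/
theorem exists_normal_of_subnormal_prime_power_index {G : Type*} [Group G]
    (p k : ℕ) (hp : p.Prime) (H : Subgroup G) (hsn : Subnormal H)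
    (hidx : H.index = p ^ k) :
    ∃ N : Subgroup G, N ≤ H ∧ N.Normal ∧ ∃ m : ℕ, N.index = p ^ m := by
  exact subnormal_aux p hp H hsn k hidx
end

section
/- For prime p ≥ 7 and integers k ≥ 2, l ≥ 1 satisfying p(k-1) > l (the Puchta condition), we have l p^p < k^p (p-1)^{p-1}; consequently the polynomial F(t) = 1 - kt + l t^p takes a negative value for some t ∈ (0,1). -/
private lemma sq_le_two_pow : ∀ n : ℕ, 7 ≤ n → n ^ 2 ≤ 2 ^ (n - 1) := by
  intro n hn
  induction n with
  | zero => omega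
  | succ m ih =>
    rcases Nat.lt_or_ge m 7 with hm | hm
    · have hm6 : m = 6 := by omega
      subst hm6; norm_num
    · have h := ih (by omega)
      have hm1 : m - 1 + 1 = m := by omega
      have h2 : (m + 1) ^ 2 ≤ 2 * m ^ 2 := by nlinarith
      have h3 : 2 ^ m = 2 * 2 ^ (m - 1) := by
        conv_lhs => rw [← hm1]
        rw [pow_succ]; ring
      calc (m + 1) ^ 2 ≤ 2 * m ^ 2 := h2
        _ ≤ 2 * 2 ^ (m - 1) := by omega
        _ = 2 ^ m := h3.symm
        _ = 2 ^ (m + 1 - 1) := by rw [Nat.add_sub_cancel]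

private lemma lemB : ∀ n : ℕ, 7 ≤ n → 7 ^ n * (n - 1) ^ 2 < 12 ^ n := by
  intro n hn
  induction n with
  | zero => omega
  | succ m ih =>
    rcases Nat.lt_or_ge m 7 with hm | hm
    · have : m = 6 := by omega
      subst this; norm_num
    · have h := ih (by omega)
      have hm1 : m - 1 + 1 = m := by omega
      have hstep : 7 * (m + 1 - 1) ^ 2 ≤ 12 * (m - 1) ^ 2 := by
        have : m + 1 - 1 = m := by omega
        rw [this]
        nlinarith [Nat.sub_add_cancel (show 1 ≤ m by omega)]
      calc 7 ^ (m + 1) * (m + 1 - 1) ^ 2 = 7 ^ m * (7 * (m + 1 - 1) ^ 2) := by ring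
        _ ≤ 7 ^ m * (12 * (m - 1) ^ 2) := Nat.mul_le_mul_left _ hstep
        _ = 12 * (7 ^ m * (m - 1) ^ 2) := by ring
        _ < 12 * 12 ^ m := by omega
        _ = 12 ^ (m + 1) := by rw [pow_succ]; ring

/-- For a prime `p ≥ 7` and integers `k ≥ 2`, `l ≥ 1` with `p(k-1) > l` (the Puchta
condition), we have `l p^p < k^p (p-1)^{p-1}`; consequently the Golod–Shafarevich
polynomial `F(t) = 1 - kt + l t^p` takes a negative value for some `t ∈ (0,1)`. -/
theorem puchta_implies_GS (p k l : ℕ) (hp : p.Prime) (hp7 : 7 ≤ p)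
    (hk : 2 ≤ k) (hl : 1 ≤ l) (hpuchta : l < p * (k - 1)) :
    l * p ^ p < k ^ p * (p - 1) ^ (p - 1) ∧
    ∃ t : ℝ, 0 < t ∧ t < 1 ∧ 1 - (k : ℝ) * t + (l : ℝ) * t ^ p < 0 := by
  -- write p = q + 1
  obtain ⟨q, rfl⟩ : ∃ q, p = q + 1 := ⟨p - 1, by omega⟩
  have hq : 6 ≤ q := by omega
  have hq1 : q + 1 - 1 = q := by omega
  rw [hq1]
  have h2pow : (q + 1) ^ 2 ≤ 2 ^ q := by
    have := sq_le_two_pow (q + 1) (by omega)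
    rwa [hq1] at this
  -- main natural number inequality
  have main : l * (q + 1) ^ (q + 1) < k ^ (q + 1) * q ^ q := by
    rcases Nat.lt_or_ge k 3 with hk3 | hk3
    · -- k = 2
      have hk2 : k = 2 := by omega
      subst hk2
      have hlq : l ≤ q := by omega
      have hB := lemB (q + 1) (by omega)
      rw [hq1] at hB
      -- q^2 * (q+1)^(q+1) < 2^(q+1) * q^(q+1)
      have key : q ^ 2 * (q + 1) ^ (q + 1) < 2 ^ (q + 1) * q ^ (q + 1) := by
        have h1 : 7 ^ (q + 1) * q ^ 2 * (q + 1) ^ (q + 1)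
            < 12 ^ (q + 1) * (q + 1) ^ (q + 1) := by
          exact (Nat.mul_lt_mul_right (Nat.pow_pos (by omega))).mpr hB
        have h2 : 12 ^ (q + 1) * (q + 1) ^ (q + 1) ≤ (14 * q) ^ (q + 1) := by
          calc 12 ^ (q + 1) * (q + 1) ^ (q + 1) = (12 * (q + 1)) ^ (q + 1) := (mul_pow _ _ _).symm
            _ ≤ (14 * q) ^ (q + 1) := Nat.pow_le_pow_left (by omega) _
        have h3 : (14 * q : ℕ) ^ (q + 1) = 7 ^ (q + 1) * (2 ^ (q + 1) * q ^ (q + 1)) := by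
          rw [show (14 * q : ℕ) = 7 * (2 * q) by ring, mul_pow, mul_pow]
        have h4 : 7 ^ (q + 1) * (q ^ 2 * (q + 1) ^ (q + 1))
            < 7 ^ (q + 1) * (2 ^ (q + 1) * q ^ (q + 1)) := by
          calc 7 ^ (q + 1) * (q ^ 2 * (q + 1) ^ (q + 1))
              = 7 ^ (q + 1) * q ^ 2 * (q + 1) ^ (q + 1) := by ring
            _ < 12 ^ (q + 1) * (q + 1) ^ (q + 1) := h1
            _ ≤ (14 * q) ^ (q + 1) := h2
            _ = _ := h3
        exact Nat.lt_of_mul_lt_mul_left h4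
      -- cancel one factor of q
      have key2 : q * (q + 1) ^ (q + 1) < 2 ^ (q + 1) * q ^ q := by
        have : q * (q * (q + 1) ^ (q + 1)) < q * (2 ^ (q + 1) * q ^ q) := by
          calc q * (q * (q + 1) ^ (q + 1)) = q ^ 2 * (q + 1) ^ (q + 1) := by ring
            _ < 2 ^ (q + 1) * q ^ (q + 1) := key
            _ = q * (2 ^ (q + 1) * q ^ q) := by rw [pow_succ]; ring
        exact Nat.lt_of_mul_lt_mul_left this
      calc l * (q + 1) ^ (q + 1) ≤ q * (q + 1) ^ (q + 1) :=
            Nat.mul_le_mul_right _ hlq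
        _ < 2 ^ (q + 1) * q ^ q := key2
    · -- k ≥ 3
      have hppos : 0 < (q + 1) ^ (q + 1) := Nat.pow_pos (by omega)
      calc l * (q + 1) ^ (q + 1)
          < (q + 1) * (k - 1) * (q + 1) ^ (q + 1) :=
            (Nat.mul_lt_mul_right hppos).mpr hpuchta
        _ = (k - 1) * ((q + 1) ^ 2 * (q + 1) ^ q) := by
            rw [pow_succ]; ring
        _ ≤ (k - 1) * (2 ^ q * (q + 1) ^ q) :=
            Nat.mul_le_mul_left _ (Nat.mul_le_mul_right _ h2pow)
        _ = (k - 1) * (2 * (q + 1)) ^ q := by rw [mul_pow]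
        _ ≤ (k - 1) * (3 * q) ^ q :=
            Nat.mul_le_mul_left _ (Nat.pow_le_pow_left (by omega) _)
        _ = (k - 1) * (3 ^ q * q ^ q) := by rw [mul_pow]
        _ ≤ k * (k ^ q * q ^ q) := by
            have h3k : 3 ^ q ≤ k ^ q := Nat.pow_le_pow_left hk3 _
            have : (k - 1) * 3 ^ q ≤ k * k ^ q :=
              Nat.mul_le_mul (by omega) h3k
            calc (k - 1) * (3 ^ q * q ^ q) = ((k - 1) * 3 ^ q) * q ^ q := by ring
              _ ≤ (k * k ^ q) * q ^ q := Nat.mul_le_mul_right _ this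
              _ = k * (k ^ q * q ^ q) := by ring
        _ = k ^ (q + 1) * q ^ q := by rw [pow_succ]; ring
  refine ⟨main, ?_⟩
  -- real part
  have hK2 : (2 : ℝ) ≤ (k : ℝ) := by exact_mod_cast hk
  have hK0 : (0 : ℝ) < k := by linarith
  have hQ0 : (0 : ℝ) < (q : ℝ) := by
    have : (6 : ℝ) ≤ (q : ℝ) := by exact_mod_cast hq
    linarith
  refine ⟨((q : ℝ) + 1) / ((q : ℝ) * k), ?_, ?_, ?_⟩
  · positivity
  · rw [div_lt_one (by positivity)]
    have hQ6 : (6 : ℝ) ≤ (q : ℝ) := by exact_mod_cast hq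
    nlinarith
  · -- the key inequality, cast from `main`
    have hcast : (l : ℝ) * ((q : ℝ) + 1) ^ (q + 1) < (k : ℝ) ^ (q + 1) * (q : ℝ) ^ q := by
      exact_mod_cast main
    have hL0 : (0 : ℝ) ≤ (l : ℝ) := by positivity
    have htp : ((q + 1 : ℝ) / ((q : ℝ) * k)) ^ (q + 1)
        = ((q : ℝ) + 1) ^ (q + 1) / ((q : ℝ) ^ (q + 1) * (k : ℝ) ^ (q + 1)) := by
      rw [div_pow, mul_pow]
    push_cast
    rw [htp]
    have hkt : (k : ℝ) * (((q : ℝ) + 1) / ((q : ℝ) * k)) = ((q : ℝ) + 1) / (q : ℝ) := by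
      field_simp
    have hsmall : (l : ℝ) * (((q : ℝ) + 1) ^ (q + 1) / ((q : ℝ) ^ (q + 1) * (k : ℝ) ^ (q + 1)))
        < 1 / (q : ℝ) := by
      rw [mul_div_assoc']
      rw [div_lt_div_iff₀ (by positivity) hQ0]
      have hqp : (q : ℝ) ^ (q + 1) = (q : ℝ) ^ q * (q : ℝ) := pow_succ _ _
      calc (l : ℝ) * ((q : ℝ) + 1) ^ (q + 1) * (q : ℝ)
          < ((k : ℝ) ^ (q + 1) * (q : ℝ) ^ q) * (q : ℝ) :=
            mul_lt_mul_of_pos_right hcast hQ0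
        _ = 1 * ((q : ℝ) ^ (q + 1) * (k : ℝ) ^ (q + 1)) := by rw [hqp]; ring
    have he : ((q : ℝ) + 1) / (q : ℝ) = 1 + 1 / (q : ℝ) := by
      field_simp
    have hgt : (1 : ℝ) + 1 / (q : ℝ) ≤ (k : ℝ) * (((q : ℝ) + 1) / ((q : ℝ) * k)) := by
      rw [hkt, he]
    linarith
end

section
/- Suppose P is a property of finitely generated groups preserved by quotients, finite index subgroups, finite index supergroups, and finite direct products. If a finitely generated group G has a finite index subgroup H that surjects onto an infinite group with P, then G itself surjects onto an infinite group with P. -/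
universe u

theorem exists_just_infinite_quotient (K : Type u) [Group K] [Infinite K] (hfg : Group.FG K) :
    ∃ (M : Subgroup K) (_ : M.Normal), Infinite (K ⧸ M) ∧
      ∀ (W : Subgroup (K ⧸ M)), W.Normal → W ≠ ⊥ → W.FiniteIndex := by
  classical
  set s : Set (Subgroup K) := {M | M.Normal ∧ Infinite (K ⧸ M)} with hs
  have hbot : (⊥ : Subgroup K) ∈ s := by
    refine ⟨inferInstance, ?_⟩
    exact (QuotientGroup.quotientBot (G := K)).toEquiv.infinite_iff.mpr ‹_›
  have hchain : ∀ c ⊆ s, IsChain (· ≤ ·) c → ∀ y ∈ c, ∃ ub ∈ s, ∀ z ∈ c, z ≤ ub := by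
    intro c hcs hchain y hyc
    haveI : Nonempty c := ⟨⟨y, hyc⟩⟩
    have hdir : DirectedOn (· ≤ ·) c := hchain.directedOn
    refine ⟨sSup c, ⟨?_, ?_⟩, fun z hz => le_sSup hz⟩
    · constructor
      intro n hn g
      rw [Subgroup.mem_sSup_of_directedOn ⟨y, hyc⟩ hdir] at hn ⊢
      obtain ⟨N, hNc, hnN⟩ := hn
      exact ⟨N, hNc, ((hcs hNc).1).conj_mem n hnN g⟩
    · by_contra hfin
      rw [not_infinite_iff_finite] at hfin
      haveI : Finite (K ⧸ sSup c) := hfin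
      haveI : (sSup c).FiniteIndex := ⟨Subgroup.index_ne_zero_of_finite⟩
      haveI : Group.FG ↥(sSup c) := Subgroup.fg_of_index_ne_zero (sSup c)
      obtain ⟨S, hSgen⟩ := (Group.fg_iff_subgroup_fg (sSup c)).mp ‹_›
      have key : ∀ T : Finset K, (∀ x ∈ T, x ∈ sSup c) → ∃ N ∈ c, ∀ x ∈ T, x ∈ N := by
        intro T
        induction T using Finset.induction_on with
        | empty => exact fun _ => ⟨y, hyc, by simp⟩
        | @insert a T ha ih =>
          intro hT
          obtain ⟨N, hNc, hN⟩ := ih (fun x hx => hT x (Finset.mem_insert_of_mem hx))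
          have haS : a ∈ sSup c := hT a (Finset.mem_insert_self a T)
          rw [Subgroup.mem_sSup_of_directedOn ⟨y, hyc⟩ hdir] at haS
          obtain ⟨Na, hNac, hNa⟩ := haS
          obtain ⟨Z, hZc, h1, h2⟩ := hdir N hNc Na hNac
          refine ⟨Z, hZc, ?_⟩
          intro x hx
          rcases Finset.mem_insert.mp hx with rfl | hx
          · exact h2 hNa
          · exact h1 (hN x hx)
      obtain ⟨N, hNc, hN⟩ := key S (fun x hx => hSgen ▸ Subgroup.subset_closure hx)
      have hSz : (S : Set K) ⊆ (N : Subgroup K) := fun x hx => hN x hx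
      have hle : sSup c ≤ N := hSgen ▸ (Subgroup.closure_le _).mpr hSz
      have heq : (N : Subgroup K) = sSup c := le_antisymm (le_sSup hNc) hle
      have hinf := (hcs hNc).2
      rw [heq] at hinf
      exact @not_finite (K ⧸ sSup c) hinf hfin
  obtain ⟨M, -, hMs, hMmax⟩ := zorn_le_nonempty₀ s hchain ⊥ hbot
  haveI hMnorm := hMs.1
  haveI hMinf := hMs.2
  refine ⟨M, hMnorm, hMinf, ?_⟩
  intro W hW hWne
  haveI := hW
  let M' : Subgroup K := W.comap (QuotientGroup.mk' M)
  have hM' : M' = W.comap (QuotientGroup.mk' M) := rfl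
  haveI : M'.Normal := W.normal_comap _
  have hMle : M ≤ M' := by
    intro x hx
    have : (QuotientGroup.mk' M) x = 1 := (QuotientGroup.eq_one_iff x).mpr hx
    simp only [hM', Subgroup.mem_comap, this]
    exact W.one_mem
  have hMlt : M < M' := by
    rcases lt_or_eq_of_le hMle with h | h
    · exact h
    · exfalso
      apply hWne
      rw [eq_bot_iff]
      intro w hw
      obtain ⟨x, rfl⟩ := QuotientGroup.mk'_surjective M w
      have hx : x ∈ M' := Subgroup.mem_comap.mpr hw
      rw [← h] at hx
      simp [QuotientGroup.eq_one_iff, hx]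
  -- maximality: K ⧸ M' is finite
  have hM'fin : Finite (K ⧸ M') := by
    by_contra h
    rw [not_finite_iff_infinite] at h
    have : M' ∈ s := ⟨inferInstance, h⟩
    exact hMlt.ne (le_antisymm hMle (hMmax this hMle))
  -- transfer along the third isomorphism theorem
  have hWmap : M'.map (QuotientGroup.mk' M) = W :=
    Subgroup.map_comap_eq_self_of_surjective (QuotientGroup.mk'_surjective M) W
  have e := QuotientGroup.quotientQuotientEquivQuotient M M' hMle
  haveI : Finite ((K ⧸ M) ⧸ M'.map (QuotientGroup.mk' M)) := Finite.of_equiv _ e.symm.toEquiv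
  rw [← hWmap]
  exact ⟨Subgroup.index_ne_zero_of_finite⟩

section
variable (P : ∀ (G : Type u) [Group G], Prop)
  (hquot : ∀ (G : Type u) [Group G] (K : Type u) [Group K] (f : G →* K),
    Function.Surjective f → P G → P K)
  (hsub : ∀ (G : Type u) [Group G] (H : Subgroup G), H.FiniteIndex → P G → P H)
  (hprod : ∀ (G : Type u) [Group G] (K : Type u) [Group K], P G → P K → P (G × K))

include hquot


theorem P_iso {A B : Type u} [Group A] [Group B] (e : A ≃* B) (hA : P A) : P B :=
  hquot A B e.toMonoidHom e.surjective hA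

include hprod in
theorem P_pi (K : Type u) [Group K] (hPK : P K) (n : ℕ) : P (Fin (n + 1) → K) := by
  induction n with
  | zero =>
    exact P_iso P hquot ({ (Equiv.funUnique (Fin 1) K).symm with
      map_mul' := fun a b => rfl } : K ≃* (Fin 1 → K)) hPK
  | succ n ih =>
    exact P_iso P hquot
      (({ (Fin.consEquiv (fun _ => K)).symm with map_mul' := fun a b => rfl } :
        (Fin (n + 2) → K) ≃* K × (Fin (n + 1) → K)).symm)
      (hprod _ _ hPK ih)

include hsub hprod

theorem subdirect_P (K : Type u) [Group K] [Infinite K] (hPK : P K)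
    (hJI : ∀ W : Subgroup K, W.Normal → W ≠ ⊥ → W.FiniteIndex) :
    ∀ (n : ℕ) (S : Subgroup (Fin n → K)),
      (∀ i, Function.Surjective (fun s : S => (s : Fin n → K) i)) → Infinite S → P S := by
  intro n
  induction n with
  | zero =>
    intro S _ hinf
    haveI : Subsingleton (Fin 0 → K) := ⟨fun a b => funext fun i => i.elim0⟩
    haveI : Subsingleton S := ⟨fun a b => Subtype.ext (Subsingleton.elim _ _)⟩
    haveI := hinf
    exact absurd ‹Subsingleton S› (not_subsingleton S)
  | succ n ih =>
    intro S hsurj hinf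
    set T : Fin (n + 1) → Subgroup K :=
      fun i => S.comap (MonoidHom.mulSingle (fun _ => K) i) with hT
    have hTnorm : ∀ i, (T i).Normal := by
      intro i
      constructor
      intro k hk x
      obtain ⟨s, hs⟩ := hsurj i x
      have hmem : (s : Fin (n+1) → K) * Pi.mulSingle i k * (s : Fin (n+1) → K)⁻¹ ∈ S :=
        S.mul_mem (S.mul_mem s.2 hk) (S.inv_mem s.2)
      have heq : (s : Fin (n+1) → K) * Pi.mulSingle i k * (s : Fin (n+1) → K)⁻¹
          = Pi.mulSingle i (x * k * x⁻¹) := by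
        funext j
        by_cases hj : j = i
        · subst hj; simp [hs]
        · simp [Pi.mulSingle_eq_of_ne hj]
      rw [heq] at hmem
      exact hmem
    by_cases hcase : ∀ i, T i ≠ ⊥
    · -- all T i nontrivial, hence finite index; S has finite index
      have hfi : ∀ i, (T i).FiniteIndex := fun i => hJI (T i) (hTnorm i) (hcase i)
      have hPi : (Subgroup.pi Set.univ T).FiniteIndex := by
        constructor
        rw [Subgroup.index_pi]
        exact Finset.prod_ne_zero_iff.mpr fun i _ => (hfi i).index_ne_zero
      have hle : Subgroup.pi Set.univ T ≤ S := by
        intro x hx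
        classical
        rw [← Finset.noncommProd_mulSingle x]
        exact Subgroup.noncommProd_mem S _
          (fun i _ => Subgroup.mem_comap.mp (hx i (Set.mem_univ i)))
      haveI := hPi
      haveI : S.FiniteIndex := Subgroup.finiteIndex_of_le hle
      exact hsub _ S this (P_pi P hquot hprod K hPK n)
    · -- some T i is trivial: drop coordinate i
      push_neg at hcase
      obtain ⟨i, hTi⟩ := hcase
      set r : (Fin (n + 1) → K) →* (Fin n → K) :=
        { toFun := fun x j => x (i.succAbove j)
          map_one' := rfl
          map_mul' := fun a b => rfl } with hr
      set S' := S.map r with hS'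
      have hker : ∀ s : S, r (s : Fin (n+1) → K) = 1 → (s : Fin (n+1) → K) = 1 := by
        intro s hs
        have hallj : ∀ j : Fin n, (s : Fin (n+1) → K) (i.succAbove j) = 1 :=
          fun j => congrFun hs j
        have hsingle : (s : Fin (n+1) → K) = Pi.mulSingle i ((s : Fin (n+1) → K) i) := by
          funext j
          by_cases hj : j = i
          · subst hj; simp
          · obtain ⟨k, hk⟩ := Fin.exists_succAbove_eq hj
            rw [← hk]
            simp [hallj k, Pi.mulSingle_eq_of_ne (hk ▸ hj)]
        have : ((s : Fin (n+1) → K) i) ∈ T i := by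
          rw [hT]
          simp only [Subgroup.mem_comap, MonoidHom.mulSingle_apply]
          rw [← hsingle]
          exact s.2
        rw [hTi, Subgroup.mem_bot] at this
        rw [hsingle, this]
        simp
      have hinj : Function.Injective (r.subgroupMap S) := by
        rw [injective_iff_map_eq_one]
        intro s hs
        have : r (s : Fin (n+1) → K) = 1 := congrArg Subtype.val hs
        exact Subtype.ext (hker s this)
      have hsurj' : Function.Surjective (r.subgroupMap S) :=
        MonoidHom.subgroupMap_surjective r S
      have e : S ≃* S' := MulEquiv.ofBijective (r.subgroupMap S) ⟨hinj, hsurj'⟩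
      haveI := hinf
      haveI : Infinite S' := e.toEquiv.infinite_iff.mp ‹_›
      have hproj : ∀ j, Function.Surjective (fun s' : S' => (s' : Fin n → K) j) := by
        intro j k
        obtain ⟨s, hs⟩ := hsurj (i.succAbove j) k
        exact ⟨r.subgroupMap S s, hs⟩
      exact P_iso P hquot e.symm (ih S' hproj ‹_›)
end


/-- Suppose `P` is a property of groups preserved by quotients, finite index subgroups,
finite index supergroups, and finite direct products. If the finitely generated group `G`
has a finite index subgroup `H` mapping onto an infinite group with `P`, then `G` itself
maps onto an infinite group with `P`. -/
theorem surjects_onto_infinite_with_P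
    (P : ∀ (G : Type u) [Group G], Prop)
    (hquot : ∀ (G : Type u) [Group G] (K : Type u) [Group K] (f : G →* K),
      Function.Surjective f → P G → P K)
    (hsub : ∀ (G : Type u) [Group G] (H : Subgroup G), H.FiniteIndex → P G → P H)
    (hsup : ∀ (G : Type u) [Group G] (H : Subgroup G), H.FiniteIndex → P H → P G)
    (hprod : ∀ (G : Type u) [Group G] (K : Type u) [Group K], P G → P K → P (G × K))
    (G : Type u) [Group G] (hfg : Group.FG G)
    (H : Subgroup G) (hH : H.FiniteIndex)
    (hmaps : ∃ (K : Type u) (iK : Group K),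
      letI := iK
      ∃ f : H →* K, Function.Surjective f ∧ Infinite K ∧ P K) :
    ∃ (L : Type u) (iL : Group L),
      letI := iL
      ∃ g : G →* L, Function.Surjective g ∧ Infinite L ∧ P L := by
  classical
  obtain ⟨K₀, iK₀, f, hfsurj, hK₀inf, hPK₀⟩ := hmaps
  letI := iK₀
  haveI := hH
  -- Step 1: the normal core
  set N : Subgroup G := H.normalCore with hN
  haveI hNnorm : N.Normal := Subgroup.normalCore_normal H
  haveI hNfi : N.FiniteIndex := Subgroup.finiteIndex_normalCore H
  have hNH : N ≤ H := Subgroup.normalCore_le H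
  set N₁ : Subgroup H := N.subgroupOf H with hN₁
  haveI hN₁fi : N₁.FiniteIndex := by
    constructor
    have h1 : N.relIndex H * H.index = N.index := Subgroup.relIndex_mul_index hNH
    intro h0
    have : N.relIndex H = 0 := h0
    rw [this, zero_mul] at h1
    exact hNfi.index_ne_zero h1.symm
  -- Step 2: the image K₁ of N₁, a finite index subgroup of K₀
  set K₁ : Subgroup K₀ := N₁.map f with hK₁
  haveI hK₁fi : K₁.FiniteIndex := by
    constructor
    intro h0
    exact hN₁fi.index_ne_zero (Nat.eq_zero_of_zero_dvd (h0 ▸ N₁.index_map_dvd hfsurj))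
  haveI hK₁inf : Infinite K₁ := by
    by_contra hfin
    rw [not_infinite_iff_finite] at hfin
    have h1 : Nat.card K₁ * K₁.index = Nat.card K₀ := Subgroup.card_mul_index K₁
    have h2 : 0 < Nat.card K₁ := Nat.card_pos
    have h3 : 0 < Nat.card K₀ := by
      rw [← h1]
      exact Nat.mul_pos h2 (Nat.pos_of_ne_zero hK₁fi.index_ne_zero)
    have h4 := Nat.card_eq_zero_of_infinite (α := K₀)
    omega
  have hPK₁ : P K₁ := hsub K₀ K₁ hK₁fi hPK₀
  -- finite generation
  haveI : Group.FG H := Subgroup.fg_of_index_ne_zero H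
  haveI : Group.FG N₁ := Subgroup.fg_of_index_ne_zero N₁
  have f₁ : N₁ →* K₁ := f.subgroupMap N₁
  have hf₁surj : Function.Surjective (f.subgroupMap N₁) := f.subgroupMap_surjective N₁
  haveI : Group.FG K₁ := Group.fg_of_surjective hf₁surj
  -- Step 3: just infinite quotient Q of K₁
  obtain ⟨M, hMnorm, hQinf, hJI⟩ := exists_just_infinite_quotient K₁ inferInstance
  haveI := hMnorm
  set Q := (K₁ ⧸ M) with hQdef
  haveI : Infinite Q := hQinf
  have hPQ : P Q := hquot K₁ Q (QuotientGroup.mk' M) (QuotientGroup.mk'_surjective M) hPK₁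
  -- surjection from N onto Q
  set iso := Subgroup.subgroupOfEquivOfLe hNH with hiso
  set fN : N →* Q :=
    ((QuotientGroup.mk' M).comp (f.subgroupMap N₁)).comp iso.symm.toMonoidHom with hfN
  have hfNsurj : Function.Surjective fN := by
    intro q
    obtain ⟨k, rfl⟩ := QuotientGroup.mk'_surjective M q
    obtain ⟨x, hx⟩ := hf₁surj k
    refine ⟨iso x, ?_⟩
    simp only [hfN, MonoidHom.comp_apply, MulEquiv.coe_toMonoidHom,
      MulEquiv.symm_apply_apply]
    rw [hx]
  -- Step 4: coset representatives
  haveI : Finite (G ⧸ N) := N.finite_quotient_of_finiteIndex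
  obtain ⟨n, ⟨eQ⟩⟩ := Finite.exists_equiv_fin (G ⧸ N)
  set rep : Fin n → G := fun j => Quotient.out (eQ.symm j) with hrep
  have hrep_mk : ∀ j, (QuotientGroup.mk (rep j) : G ⧸ N) = eQ.symm j := by
    intro j
    exact QuotientGroup.out_eq' _
  have hrep_surj : ∀ g : G, ∃ j, (rep j)⁻¹ * g ∈ N := by
    intro g
    refine ⟨eQ (QuotientGroup.mk g), ?_⟩
    rw [← QuotientGroup.eq (s := N)]
    rw [hrep_mk, Equiv.symm_apply_apply]
  -- the preimage D of the kernel of fN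
  set D : Subgroup G := fN.ker.map N.subtype with hD
  have hDN : D ≤ N := Subgroup.map_subtype_le _
  have hD_mem : ∀ x (hx : x ∈ N), (x ∈ D ↔ fN ⟨x, hx⟩ = 1) := by
    intro x hx
    constructor
    · intro h
      obtain ⟨y, hy, hyx⟩ := Subgroup.mem_map.mp h
      have : y = ⟨x, hx⟩ := Subtype.ext hyx
      rw [← this]
      exact hy
    · intro h1
      exact Subgroup.mem_map.mpr ⟨⟨x, hx⟩, h1, rfl⟩
  have hDconj : ∀ m ∈ N, ∀ d ∈ D, m * d * m⁻¹ ∈ D := by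
    intro m hm d hd
    have hdN : d ∈ N := hDN hd
    have hmem : m * d * m⁻¹ ∈ N := N.mul_mem (N.mul_mem hm hdN) (N.inv_mem hm)
    rw [hD_mem _ hmem]
    have heq : (⟨m * d * m⁻¹, hmem⟩ : N) = ⟨m, hm⟩ * ⟨d, hdN⟩ * (⟨m, hm⟩ : N)⁻¹ := rfl
    rw [heq, map_mul, map_mul, map_inv, (hD_mem d hdN).mp hd, mul_one, mul_inv_cancel]
  -- conjugation keeps elements in N
  have hconjmem : ∀ (j : Fin n) (x : G), x ∈ N → (rep j)⁻¹ * x * rep j ∈ N := by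
    intro j x hx
    simpa using hNnorm.conj_mem x hx (rep j)⁻¹
  -- the subdirect embedding
  set ψ : N →* (Fin n → Q) :=
    MonoidHom.mk' (fun x j => fN ⟨(rep j)⁻¹ * (x : G) * rep j, hconjmem j x x.2⟩)
      (fun a b => by
        funext j
        show fN _ = fN _ * fN _
        rw [← map_mul]
        congr 1
        ext
        show (rep j)⁻¹ * ((a : G) * b) * rep j
          = ((rep j)⁻¹ * a * rep j) * ((rep j)⁻¹ * b * rep j)
        group) with hψ
  have hψproj : ∀ j : Fin n, Function.Surjective (fun s : ψ.range => (s : Fin n → Q) j) := by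
    intro j q
    obtain ⟨x, hx⟩ := hfNsurj q
    have hmem : rep j * (x : G) * (rep j)⁻¹ ∈ N := hNnorm.conj_mem _ x.2 _
    refine ⟨⟨ψ ⟨_, hmem⟩, ⟨_, rfl⟩⟩, ?_⟩
    show fN ⟨(rep j)⁻¹ * (rep j * (x : G) * (rep j)⁻¹) * rep j, _⟩ = q
    rw [← hx]
    congr 1
    ext
    show (rep j)⁻¹ * (rep j * (x : G) * (rep j)⁻¹) * rep j = (x : G)
    group
  haveI hNonempty : Nonempty (Fin n) := Nonempty.map eQ ⟨QuotientGroup.mk 1⟩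
  haveI hSinf : Infinite ψ.range := by
    obtain ⟨j⟩ := hNonempty
    exact Infinite.of_surjective _ (hψproj j)
  have hPS : P ψ.range :=
    subdirect_P P hquot hsub hprod Q hPQ hJI n ψ.range hψproj hSinf
  -- the kernel E, a normal subgroup of G
  set E : Subgroup G := ψ.ker.map N.subtype with hE
  have hEN : E ≤ N := Subgroup.map_subtype_le _
  have hE_mem : ∀ x (hx : x ∈ N),
      (x ∈ E ↔ ∀ j, (rep j)⁻¹ * x * rep j ∈ D) := by
    intro x hx
    constructor
    · intro h j
      obtain ⟨y, hy, hyx⟩ := Subgroup.mem_map.mp h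
      have hyx' : y = ⟨x, hx⟩ := Subtype.ext hyx
      rw [hyx'] at hy
      have := congrFun (show ψ ⟨x, hx⟩ = 1 from hy) j
      rw [hD_mem _ (hconjmem j x hx)]
      exact this
    · intro h
      refine Subgroup.mem_map.mpr ⟨⟨x, hx⟩, ?_, rfl⟩
      show ψ ⟨x, hx⟩ = 1
      funext j
      exact (hD_mem _ (hconjmem j x hx)).mp (h j)
  haveI hEnorm : E.Normal := by
    constructor
    intro x hx g
    have hxN : x ∈ N := hEN hx
    have hgx : g * x * g⁻¹ ∈ N := hNnorm.conj_mem x hxN g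
    rw [hE_mem _ hgx]
    intro j
    obtain ⟨j', hj'⟩ := hrep_surj (g⁻¹ * rep j)
    set m : G := (rep j')⁻¹ * (g⁻¹ * rep j) with hm
    have hmN : m ∈ N := hj'
    have hd : (rep j')⁻¹ * x * rep j' ∈ D := (hE_mem x hxN).mp hx j'
    have hDm : m⁻¹ * ((rep j')⁻¹ * x * rep j') * m ∈ D := by
      have := hDconj m⁻¹ (N.inv_mem hmN) _ hd
      rwa [inv_inv] at this
    have heq : (rep j)⁻¹ * (g * x * g⁻¹) * rep j
        = m⁻¹ * ((rep j')⁻¹ * x * rep j') * m := by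
      rw [hm]
      group
    rw [heq]
    exact hDm
  -- the quotient L = G / E
  refine ⟨G ⧸ E, inferInstance, QuotientGroup.mk' E, QuotientGroup.mk'_surjective E, ?_, ?_⟩
  all_goals {
    set S₂ : Subgroup (G ⧸ E) := N.map (QuotientGroup.mk' E) with hS₂
    set c : N →* G ⧸ E := (QuotientGroup.mk' E).comp N.subtype with hc
    have hkerc : c.ker = ψ.ker := by
      ext x
      constructor
      · intro hxc
        have : ((x : G)) ∈ E := by
          have := hxc
          rwa [MonoidHom.mem_ker, MonoidHom.comp_apply, ← MonoidHom.mem_ker,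
            QuotientGroup.ker_mk'] at this
        obtain ⟨y, hy, hyx⟩ := Subgroup.mem_map.mp this
        rwa [show y = x from Subtype.ext hyx] at hy
      · intro hxψ
        have : ((x : G)) ∈ E := Subgroup.mem_map.mpr ⟨x, hxψ, rfl⟩
        rwa [MonoidHom.mem_ker, MonoidHom.comp_apply, ← MonoidHom.mem_ker,
          QuotientGroup.ker_mk']
    have hrangec : c.range = S₂ := by
      rw [hc, MonoidHom.range_comp, Subgroup.range_subtype]
    have e₃ : (S₂ : Type u) ≃* ψ.range :=
      ((MulEquiv.subgroupCongr hrangec.symm).trans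
        (QuotientGroup.quotientKerEquivRange c).symm).trans
        ((QuotientGroup.quotientMulEquivOfEq hkerc).trans
          (QuotientGroup.quotientKerEquivRange ψ))
    haveI : Infinite S₂ := Infinite.of_surjective _ e₃.surjective
    have hker_le : (QuotientGroup.mk' E).ker ≤ N := by
      rw [QuotientGroup.ker_mk']
      exact hEN
    have hS₂fi : S₂.FiniteIndex := by
      constructor
      rw [N.index_map_eq (QuotientGroup.mk'_surjective E) hker_le]
      exact hNfi.index_ne_zero
    first
      | exact Infinite.of_injective (Subtype.val : S₂ → G ⧸ E) Subtype.val_injective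
      | exact hsup (G ⧸ E) S₂ hS₂fi (P_iso P hquot e₃.symm hPS)
  }
end

section
/- Let G be a finitely presented group with d generators, r relators, and p-deficiency 1 + ε with ε > 0; set k = d - r - 1. Then for all sufficiently large n, any subnormal subgroup G_n of index p^n obtained by iterated Puchta rewriting satisfies 4·def(G_n) + (d_p(G_n))^2 - 4·d_p(G_n) > 0, since this quantity is bounded below by the quadratic 4 + 4 p^n k + (p^n ε - 2)^2 - 4 in p^n, which has positive leading coefficient ε^2. -/
/-- Let `G` be finitely presented with `d` generators, `r` relators, `p`-deficiency
`1 + ε` (`ε > 0`), and `k = d - r - 1`. The iterated Puchta rewriting gives subnormal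
subgroups `Gₙ` of index `pⁿ` with `def(Gₙ) ≥ pⁿ k + 1` and `d_p(Gₙ) ≥ pⁿ ε + 1`; then
for all sufficiently large `n`, `4·def(Gₙ) + d_p(Gₙ)² - 4·d_p(Gₙ) > 0` (the strongly
Golod–Shafarevich condition), since this quantity is bounded below by the quadratic
`4 + 4 pⁿ k + (pⁿ ε - 2)² - 4` in `pⁿ`, which has positive leading coefficient `ε²`. -/
theorem strongly_GS_eventually (p : ℕ) (hp : p.Prime) (ε k : ℝ) (hε : 0 < ε)
    (D d : ℕ → ℝ)
    (hD : ∀ n, (p : ℝ) ^ n * k + 1 ≤ D n)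
    (hd : ∀ n, (p : ℝ) ^ n * ε + 1 ≤ d n) :
    (∃ x₀ : ℝ, ∀ x : ℝ, x₀ ≤ x → 0 < 4 + 4 * x * k + (x * ε - 2) ^ 2 - 4) ∧
    ∃ N : ℕ, ∀ n : ℕ, N ≤ n → 0 < 4 * D n + (d n) ^ 2 - 4 * d n := by
  have hε2 : (0:ℝ) < ε ^ 2 := by positivity
  set x₀ : ℝ := (4 * ε + 4 * |k| + 4) / ε ^ 2 + 1 with hx₀
  have hx₀pos : 0 < x₀ := by positivity
  have key : ∀ x : ℝ, x₀ ≤ x → 0 < 4 + 4 * x * k + (x * ε - 2) ^ 2 - 4 := by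
    intro x hx
    have hxpos : 0 < x := lt_of_lt_of_le hx₀pos hx
    have h1 : (4 * ε + 4 * |k| + 4) / ε ^ 2 ≤ x := by
      have hx' := hx; rw [hx₀] at hx'; linarith
    have h2 : 4 * ε + 4 * |k| + 4 ≤ ε ^ 2 * x := by
      rw [div_le_iff₀ hε2] at h1; linarith
    have hk1 : -|k| ≤ k := neg_abs_le k
    nlinarith [mul_le_mul_of_nonneg_right h2 hxpos.le, mul_le_mul_of_nonneg_left hk1 hxpos.le,
      sq_nonneg (x * ε - 2), sq_nonneg x]
  refine ⟨⟨x₀, key⟩, ?_⟩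
  have hp1 : (1:ℝ) < (p : ℝ) := by exact_mod_cast hp.one_lt
  obtain ⟨N, hN⟩ := pow_unbounded_of_one_lt (max x₀ (3 / ε)) hp1
  refine ⟨N, fun n hn => ?_⟩
  have hmono : (p:ℝ) ^ N ≤ (p:ℝ) ^ n := pow_le_pow_right₀ (le_of_lt hp1) hn
  have hx : max x₀ (3 / ε) ≤ (p:ℝ) ^ n := le_trans hN.le hmono
  have hx1 : x₀ ≤ (p:ℝ) ^ n := le_trans (le_max_left _ _) hx
  have hx2 : 3 / ε ≤ (p:ℝ) ^ n := le_trans (le_max_right _ _) hx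
  have hy : (3:ℝ) ≤ (p:ℝ) ^ n * ε := by
    rw [div_le_iff₀ hε] at hx2; linarith
  have hq := key _ hx1
  have hDn := hD n
  have hdn := hd n
  have hdge : (p:ℝ) ^ n * ε + 1 ≤ d n := hdn
  -- d n ≥ a ≥ 2 implies d² - 4d ≥ a² - 4a
  nlinarith [mul_nonneg (sub_nonneg.mpr hdge) (by nlinarith : (0:ℝ) ≤ d n + ((p:ℝ)^n * ε + 1) - 4)]
end

section
/- For an odd prime p > 3, the presentation ⟨x, y | x^p, y^p, (x^i y^j)^{p^2} for 1 ≤ i ≤ (p-1)/2, 1 ≤ j ≤ p-1⟩ has p-deficiency 2 - 2/p - (p-1)^2/(2p^2), and this quantity is strictly greater than 1 for all p ≥ 3. -/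
/-- Exponent-sum homomorphism at generator `t`. -/
noncomputable def GSe (t : Fin 2) : FreeGroup (Fin 2) →* Multiplicative ℤ :=
  FreeGroup.lift (fun i => Multiplicative.ofAdd (if i = t then 1 else 0))

lemma GSe_of_pow (t s : Fin 2) (n : ℕ) :
    Multiplicative.toAdd (GSe t (FreeGroup.of s ^ n)) = n * (if s = t then 1 else 0) := by
  simp [GSe, map_pow, toAdd_pow]

lemma GSe_prod_pow_0 (i j n : ℕ) :
    Multiplicative.toAdd (GSe 0 ((FreeGroup.of (0:Fin 2) ^ i * FreeGroup.of 1 ^ j) ^ n)) =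
      n * i := by
  simp [GSe, map_pow, map_mul, toAdd_pow]

lemma GSe_prod_pow_1 (i j n : ℕ) :
    Multiplicative.toAdd (GSe 1 ((FreeGroup.of (0:Fin 2) ^ i * FreeGroup.of 1 ^ j) ^ n)) =
      n * j := by
  simp [GSe, map_pow, map_mul, toAdd_pow]

lemma nuP_eq {X : Type*} (p : ℕ) (r : FreeGroup X) (k : ℕ)
    (hmem : ∃ w : FreeGroup X, w ^ p ^ k = r)
    (hub : ∀ m, (∃ w : FreeGroup X, w ^ p ^ m = r) → m ≤ k) : nuP p r = k :=
  le_antisymm (csSup_le ⟨k, hmem⟩ hub) (le_csSup ⟨k, hub⟩ hmem)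

lemma nuP_of_pow (p : ℕ) (hp : 1 < p) (s : Fin 2) :
    nuP p (FreeGroup.of s ^ p) = 1 := by
  apply nuP_eq
  · exact ⟨FreeGroup.of s, by rw [pow_one]⟩
  · rintro m ⟨w, hw⟩
    have h := congrArg (fun g => Multiplicative.toAdd
      ((FreeGroup.lift fun i : Fin 2 => Multiplicative.ofAdd (if i = s then (1:ℤ) else 0)) g)) hw
    simp [map_pow, toAdd_pow] at h
    have hdvd : (p : ℤ) ^ m ∣ (p : ℤ) :=
      ⟨Multiplicative.toAdd ((FreeGroup.lift fun i : Fin 2 =>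
        Multiplicative.ofAdd (if i = s then (1:ℤ) else 0)) w), by linarith⟩
    have hle : (p : ℤ) ^ m ≤ (p : ℤ) ^ 1 := by
      rw [pow_one]; exact Int.le_of_dvd (by positivity) hdvd
    have : (p:ℕ) ^ m ≤ p ^ 1 := by exact_mod_cast hle
    exact (Nat.pow_le_pow_iff_right hp).mp this

lemma nuP_of_prod_pow (p : ℕ) (hp : p.Prime) (i j : ℕ) (hi1 : 1 ≤ i) (hip : i < p) :
    nuP p ((FreeGroup.of (0:Fin 2) ^ i * FreeGroup.of 1 ^ j) ^ p ^ 2) = 2 := by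
  apply nuP_eq
  · exact ⟨_, rfl⟩
  · rintro m ⟨w, hw⟩
    have h := congrArg (fun g => Multiplicative.toAdd
      ((FreeGroup.lift fun i : Fin 2 => Multiplicative.ofAdd (if i = 0 then (1:ℤ) else 0)) g)) hw
    simp [map_pow, map_mul, toAdd_pow] at h
    have hdvd : (p : ℤ) ^ m ∣ (i : ℤ) * (p : ℤ) ^ 2 :=
      ⟨Multiplicative.toAdd ((FreeGroup.lift fun i : Fin 2 =>
        Multiplicative.ofAdd (if i = 0 then (1:ℤ) else 0)) w), by linarith⟩
    have hpi : ¬ (p : ℤ) ∣ (i : ℤ) := by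
      rw [Int.natCast_dvd_natCast]
      exact Nat.not_dvd_of_pos_of_lt hi1 hip
    have hdvd2 : (p : ℤ) ^ m ∣ (p : ℤ) ^ 2 :=
      (Nat.prime_iff_prime_int.mp hp).pow_dvd_of_dvd_mul_left m hpi hdvd
    have hle : (p : ℤ) ^ m ≤ (p : ℤ) ^ 2 := Int.le_of_dvd (by have := hp.pos; positivity) hdvd2
    have : (p:ℕ) ^ m ≤ p ^ 2 := by exact_mod_cast hle
    exact (Nat.pow_le_pow_iff_right hp.one_lt).mp this

/-- For an odd prime `p > 3`, the presentation
`⟨x, y | xᵖ, yᵖ, (xⁱ yʲ)^(p²), 1 ≤ i ≤ (p-1)/2, 1 ≤ j ≤ p-1⟩` has `p`-deficiency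
`2 - 2/p - (p-1)²/(2p²)`, and this quantity is strictly greater than `1` for all
`p ≥ 3`. -/
theorem guptaSidki_presentation_pDef (p : ℕ) (hp : p.Prime) (hp3 : 3 < p) :
    pDef p {r : FreeGroup (Fin 2) |
        r = (FreeGroup.of 0) ^ p ∨ r = (FreeGroup.of 1) ^ p ∨
        ∃ i j : ℕ, 1 ≤ i ∧ i ≤ (p - 1) / 2 ∧ 1 ≤ j ∧ j ≤ p - 1 ∧
          r = ((FreeGroup.of 0) ^ i * (FreeGroup.of 1) ^ j) ^ (p ^ 2)} =
      2 - 2 / (p : ℝ) - ((p : ℝ) - 1) ^ 2 / (2 * (p : ℝ) ^ 2) ∧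
    ∀ q : ℝ, 3 ≤ q → 1 < 2 - 2 / q - (q - 1) ^ 2 / (2 * q ^ 2) := by
  have hp0 : (0:ℕ) < p := hp.pos
  have hp1 : 1 < p := hp.one_lt
  have hpR : (0:ℝ) < (p:ℝ) := by exact_mod_cast hp0
  constructor
  · set x := FreeGroup.of (0 : Fin 2) with hxdef
    set y := FreeGroup.of (1 : Fin 2) with hydef
    set T : Finset (FreeGroup (Fin 2)) :=
      (Finset.Icc 1 ((p-1)/2) ×ˢ Finset.Icc 1 (p-1)).image
        (fun ij => (x ^ ij.1 * y ^ ij.2) ^ (p ^ 2)) with hT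
    set S : Finset (FreeGroup (Fin 2)) := insert (x ^ p) (insert (y ^ p) T) with hS
    have hbound : ∀ i : ℕ, i ≤ (p-1)/2 → i < p := fun i hi =>
      lt_of_le_of_lt (hi.trans (Nat.div_le_self _ _)) (Nat.sub_lt hp0 one_pos)
    have hRS : {r : FreeGroup (Fin 2) |
        r = (FreeGroup.of 0) ^ p ∨ r = (FreeGroup.of 1) ^ p ∨
        ∃ i j : ℕ, 1 ≤ i ∧ i ≤ (p - 1) / 2 ∧ 1 ≤ j ∧ j ≤ p - 1 ∧
          r = ((FreeGroup.of 0) ^ i * (FreeGroup.of 1) ^ j) ^ (p ^ 2)} = ↑S := by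
      ext r
      simp only [Set.mem_setOf_eq, hS, hT, Finset.coe_insert, Set.mem_insert_iff,
        Finset.coe_image, Set.mem_image, Finset.mem_coe, Finset.mem_product, Finset.mem_Icc,
        ← hxdef, ← hydef]
      constructor
      · rintro (h | h | ⟨i, j, h1, h2, h3, h4, h5⟩)
        · exact Or.inl h
        · exact Or.inr (Or.inl h)
        · exact Or.inr (Or.inr ⟨(i, j), ⟨⟨h1, h2⟩, h3, h4⟩, h5.symm⟩)
      · rintro (h | h | ⟨⟨i, j⟩, ⟨⟨h1, h2⟩, h3, h4⟩, h5⟩)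
        · exact Or.inl h
        · exact Or.inr (Or.inl h)
        · exact Or.inr (Or.inr ⟨i, j, h1, h2, h3, h4, h5.symm⟩)
    rw [pDef, hRS]
    have htsum := Finset.tsum_subtype' S (fun r => ((p:ℝ) ^ nuP p r)⁻¹)
    rw [htsum]
    have hxT : x ^ p ∉ insert (y ^ p) T := by
      simp only [Finset.mem_insert, hT, Finset.mem_image, Finset.mem_product, Finset.mem_Icc,
        not_or, not_exists]
      constructor
      · intro h
        have hh := congrArg (fun g => Multiplicative.toAdd (GSe 0 g)) h
        simp only [hxdef, hydef, GSe_of_pow] at hh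
        norm_num at hh
        omega
      · rintro ⟨i, j⟩ ⟨⟨⟨h1, _⟩, h3, _⟩, h⟩
        have hh := congrArg (fun g => Multiplicative.toAdd (GSe 1 g)) h
        simp only [hxdef, hydef, GSe_of_pow, GSe_prod_pow_1] at hh
        norm_num at hh
        rcases hh with h' | h'
        · have : (0:ℤ) < (p:ℤ)^2 := by positivity
          omega
        · omega
    have hyT : y ^ p ∉ T := by
      simp only [hT, Finset.mem_image, Finset.mem_product, Finset.mem_Icc, not_exists]
      rintro ⟨i, j⟩ ⟨⟨⟨h1, _⟩, _, _⟩, h⟩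
      have hh := congrArg (fun g => Multiplicative.toAdd (GSe 0 g)) h
      simp only [hxdef, hydef, GSe_of_pow, GSe_prod_pow_0] at hh
      norm_num at hh
      rcases hh with h' | h'
      · have : (0:ℤ) < (p:ℤ)^2 := by positivity
        omega
      · omega
    have hinj : Set.InjOn (fun ij : ℕ × ℕ => (x ^ ij.1 * y ^ ij.2) ^ (p ^ 2))
        ↑(Finset.Icc 1 ((p-1)/2) ×ˢ Finset.Icc 1 (p-1)) := by
      rintro ⟨i, j⟩ _ ⟨i', j'⟩ _ h
      simp only at h
      have h0 := congrArg (fun g => Multiplicative.toAdd (GSe 0 g)) h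
      have h1' := congrArg (fun g => Multiplicative.toAdd (GSe 1 g)) h
      simp only [hxdef, hydef, GSe_prod_pow_0, GSe_prod_pow_1] at h0 h1'
      have hp2 : ((p:ℤ) ^ 2) ≠ 0 := by positivity
      have e1 : (i : ℤ) = i' := mul_left_cancel₀ hp2 h0
      have e2 : (j : ℤ) = j' := mul_left_cancel₀ hp2 h1'
      have : i = i' := by exact_mod_cast e1
      have : j = j' := by exact_mod_cast e2
      ext <;> assumption
    rw [hS, Finset.sum_insert hxT, Finset.sum_insert hyT, hT,
      Finset.sum_image (fun a ha b hb => hinj ha hb)]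
    have hsum : ∑ ij ∈ Finset.Icc 1 ((p-1)/2) ×ˢ Finset.Icc 1 (p-1),
        ((p : ℝ) ^ (nuP p ((x ^ ij.1 * y ^ ij.2) ^ (p ^ 2))))⁻¹
        = (((p-1)/2 : ℕ) : ℝ) * (((p-1 : ℕ)) : ℝ) * ((p:ℝ) ^ 2)⁻¹ := by
      calc ∑ ij ∈ Finset.Icc 1 ((p-1)/2) ×ˢ Finset.Icc 1 (p-1),
          ((p : ℝ) ^ (nuP p ((x ^ ij.1 * y ^ ij.2) ^ (p ^ 2))))⁻¹
          = ∑ _ij ∈ Finset.Icc 1 ((p-1)/2) ×ˢ Finset.Icc 1 (p-1), ((p:ℝ) ^ (2:ℕ))⁻¹ := by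
            refine Finset.sum_congr rfl (fun ij hij => ?_)
            simp only [Finset.mem_product, Finset.mem_Icc] at hij
            rw [hxdef, hydef, nuP_of_prod_pow p hp _ _ hij.1.1 (hbound _ hij.1.2)]
        _ = (((p-1)/2 : ℕ) : ℝ) * (((p-1 : ℕ)) : ℝ) * ((p:ℝ) ^ 2)⁻¹ := by
            rw [Finset.sum_const, Finset.card_product, Nat.card_Icc, Nat.card_Icc]
            simp only [Nat.add_sub_cancel, nsmul_eq_mul]
            push_cast
            ring
    rw [hsum, hxdef, hydef, nuP_of_pow p hp1, nuP_of_pow p hp1]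
    have h2div : 2 ∣ p - 1 := by
      obtain ⟨k, hk⟩ := hp.odd_of_ne_two (by omega)
      omega
    have hcast : (((p-1)/2 : ℕ) : ℝ) = ((p:ℝ) - 1) / 2 := by
      rw [Nat.cast_div h2div (by norm_num)]
      congr 1
      rw [Nat.cast_sub hp.one_le]
      norm_num
    have hcast2 : ((p - 1 : ℕ) : ℝ) = (p:ℝ) - 1 := by
      rw [Nat.cast_sub hp.one_le]; norm_num
    rw [hcast, hcast2]
    have hcard : (Fintype.card (Fin 2) : ℝ) = 2 := by simp
    rw [hcard]
    field_simp
    ring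
  · intro q hq
    have hq0 : 0 < q := by linarith
    have key : 2 - 2 / q - (q - 1) ^ 2 / (2 * q ^ 2) - 1 = (q^2 - 2*q - 1) / (2 * q^2) := by
      field_simp
      ring
    have hpos : 0 < (q^2 - 2*q - 1) / (2 * q^2) := by
      apply div_pos
      · nlinarith
      · positivity
    linarith
end
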